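/- arXiv:2210.04748 — 7 statements merged into one kernel-verified Lean document; each statement's English description precedes it below -/
import Mathlib

section
/- Let n ≥ 1 and let M be an n×n complex matrix. The linear system X' = MX admits an exponential dichotomy on ℝ — that is, there exist an n×n complex matrix P with P·P = P and P·M = M·P, and constants K ≥ 1 and α > 0, such that ‖exp(t•M)·P‖ ≤ K·exp(−α·t) for all t ≥ 0 and ‖exp(t•M)·(1 − P)‖ ≤ K·exp(α·t) for all t ≤ 0 — if and only if every z in the spectrum of M over ℂ satisfies Re z ≠ 0. -/
set_option maxHeartbeats 1600000

open scoped Matrix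

attribute [local instance] Matrix.linftyOpNormedAddCommGroup

section ExpDichAux

namespace ExpDich

open Polynomial

attribute [local instance] Matrix.linftyOpNormedRing Matrix.linftyOpNormedAlgebra

variable {n : ℕ}

local notation "Mat" => Matrix (Fin n) (Fin n) ℂ


noncomputable def mvL (v : Fin n → ℂ) : Mat →L[ℂ] (Fin n → ℂ) :=
  LinearMap.toContinuousLinearMap
  { toFun := fun B => B *ᵥ v
    map_add' := fun B C => Matrix.add_mulVec B C v
    map_smul' := fun c B => Matrix.smul_mulVec c B v }

@[simp] lemma mvL_apply (v : Fin n → ℂ) (B : Mat) : mvL v B = B *ᵥ v := rfl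

lemma exp_mulVec_eigen (A : Mat) (c : ℂ) (v : Fin n → ℂ) (hv : A *ᵥ v = c • v) :
    NormedSpace.exp A *ᵥ v = Complex.exp c • v := by
  have hpow : ∀ k : ℕ, A ^ k *ᵥ v = c ^ k • v := by
    intro k
    induction k with
    | zero => simp [Matrix.one_mulVec]
    | succ k ih =>
      rw [pow_succ', ← Matrix.mulVec_mulVec, ih, Matrix.mulVec_smul, hv, smul_smul, ← pow_succ]
  have h1 : NormedSpace.exp A *ᵥ v = mvL v (NormedSpace.exp A) := rfl
  rw [h1, NormedSpace.exp_eq_tsum ℂ,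
    (mvL v).map_tsum (NormedSpace.expSeries_summable' A)]
  have h2 : ∀ k : ℕ, mvL v (((k.factorial : ℕ) : ℂ)⁻¹ • A ^ k) = (((k.factorial : ℕ) : ℂ)⁻¹ * c ^ k) • v := by
    intro k
    rw [map_smul, mvL_apply, hpow, smul_smul]
  have hsum : Summable fun k : ℕ => ((k.factorial : ℕ) : ℂ)⁻¹ * c ^ k := by
    simpa [smul_eq_mul] using NormedSpace.expSeries_summable' (𝕂 := ℂ) c
  rw [tsum_congr h2, hsum.tsum_smul_const, Complex.exp_eq_exp_ℂ, NormedSpace.exp_eq_tsum ℂ]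
  simp [smul_eq_mul]

lemma eval_charpoly (M : Mat) (z : ℂ) : M.charpoly.eval z = (z • 1 - M).det := by
  rw [Matrix.charpoly, ← Polynomial.coe_evalRingHom, RingHom.map_det]
  congr 1
  ext i j
  by_cases h : i = j <;>
    simp [h, Matrix.charmatrix_apply, Matrix.map_apply, Matrix.one_apply,
      Matrix.smul_apply, Matrix.sub_apply, Matrix.diagonal_apply]

lemma norm_le_sum_cols (B : Mat) : ‖B‖ ≤ ∑ j, ‖B *ᵥ Pi.single j 1‖ := by
  have h : ‖B‖₊ ≤ ∑ j, ‖B *ᵥ Pi.single j 1‖₊ := by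
    rw [Matrix.linfty_opNNNorm_def]
    apply Finset.sup_le
    intro i _
    apply Finset.sum_le_sum
    intro j _
    have : ‖B *ᵥ Pi.single j 1‖₊ = Finset.univ.sup fun i => ‖(B *ᵥ Pi.single j 1) i‖₊ :=
      Pi.nnnorm_def _
    rw [this]
    refine le_trans ?_ (Finset.le_sup (Finset.mem_univ i))
    simp [Matrix.mulVec_single]
  calc ‖B‖ = ((‖B‖₊ : ℝ)) := rfl
    _ ≤ ((∑ j, ‖B *ᵥ Pi.single j 1‖₊ : NNReal) : ℝ) := by exact_mod_cast h
    _ = ∑ j, ‖B *ᵥ Pi.single j 1‖ := by push_cast; rfl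


lemma commute_factor (A : Mat) (z w : ℂ) :
    Commute (A - z • (1 : Mat)) (A - w • (1 : Mat)) := by
  have h1 : Commute A (A - w • (1 : Mat)) :=
    (Commute.refl A).sub_right ((Commute.one_right A).smul_right w)
  have h2 : Commute (z • (1 : Mat)) (A - w • (1 : Mat)) :=
    (Commute.one_left _).smul_left z
  exact h1.sub_left h2

lemma keyA (A : Mat) (β C : ℝ) (hC : 0 ≤ C) :
    ∀ s : List ℂ, (∀ z ∈ s, z.re ≤ -β ∧ ‖A - z • (1 : Mat)‖ ≤ C) →
    ∀ v : Fin n → ℂ, (s.map fun z => A - z • (1 : Mat)).prod *ᵥ v = 0 →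
    ∀ t : ℝ, 0 ≤ t →
    ‖NormedSpace.exp (t • A) *ᵥ v‖ ≤
      Real.exp (-β * t) * (1 + C * t) ^ (s.length) * ‖v‖ := by
  intro s
  induction s with
  | nil =>
    intro _ v hv t ht
    simp only [List.map_nil, List.prod_nil, Matrix.one_mulVec] at hv
    subst hv
    simp [Matrix.mulVec_zero]
  | cons z s ih =>
    intro hs v hv t ht
    set f : ℂ → Mat := fun z => A - z • (1 : Mat) with hf
    rw [List.map_cons, List.prod_cons] at hv
    set Q : Mat := (s.map f).prod with hQ
    have hcomm : Commute (f z) Q := by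
      apply Commute.list_prod_right
      intro y hy
      obtain ⟨w, _, rfl⟩ := List.mem_map.mp hy
      exact commute_factor A z w
    set w : Fin n → ℂ := f z *ᵥ v with hwdef
    have hw : Q *ᵥ w = 0 := by
      rw [hwdef, Matrix.mulVec_mulVec, ← hcomm.eq, hv]
    have ihw := ih (fun y hy => hs y (List.mem_cons_of_mem z hy)) w hw
    have hzre : z.re ≤ -β := (hs z (List.mem_cons_self)).1
    have hzC : ‖f z‖ ≤ C := (hs z (List.mem_cons_self)).2
    set k := s.length with hk
    -- the functions
    set F : ℝ → (Fin n → ℂ) :=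
      fun u => Complex.exp (-(u : ℂ) * z) • (NormedSpace.exp (u • A) *ᵥ v) with hF
    set G : ℝ → (Fin n → ℂ) :=
      fun u => Complex.exp (-(u : ℂ) * z) • (NormedSpace.exp (u • A) *ᵥ w) with hG
    have hAcomm : ∀ u : ℝ, (A * NormedSpace.exp (u • A)) *ᵥ v
        = NormedSpace.exp (u • A) *ᵥ (A *ᵥ v) := by
      intro u
      rw [Matrix.mulVec_mulVec, (((Commute.refl A).smul_right u).exp_right).eq]
    have hderiv : ∀ u : ℝ, HasDerivAt F (G u) u := by
      intro u
      have hc : HasDerivAt (fun u : ℝ => -(u : ℂ) * z) (-z) u := by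
        simpa using (Complex.ofRealCLM.hasDerivAt (x := u)).neg.mul_const z
      have he1 : HasDerivAt (fun u : ℝ => Complex.exp (-(u : ℂ) * z))
          (Complex.exp (-(u : ℂ) * z) * -z) u := hc.cexp
      have he2 : HasDerivAt (fun u : ℝ => NormedSpace.exp (u • A))
          (A * NormedSpace.exp (u • A)) u := by
        have h := hasDerivAt_exp_smul_const' (𝕂 := ℝ) A u
        exact h
      have he3 : HasDerivAt (fun u : ℝ => NormedSpace.exp (u • A) *ᵥ v)
          ((A * NormedSpace.exp (u • A)) *ᵥ v) u := by
        have h3 := (((mvL v).restrictScalars ℝ).hasFDerivAt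
          (x := NormedSpace.exp (u • A))).comp_hasDerivAt u he2
        exact h3
      have hsm := he1.smul he3
      have heq : Complex.exp (-(u : ℂ) * z) • ((A * NormedSpace.exp (u • A)) *ᵥ v)
          + (Complex.exp (-(u : ℂ) * z) * -z) • (NormedSpace.exp (u • A) *ᵥ v) = G u := by
        rw [hAcomm u]
        have hwv : w = A *ᵥ v - z • v := by
          rw [hwdef, hf]
          simp only []
          rw [Matrix.sub_mulVec, Matrix.smul_mulVec, Matrix.one_mulVec]
        rw [hG]
        simp only []
        rw [hwv, Matrix.mulVec_sub, Matrix.mulVec_smul, smul_sub, smul_smul]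
        module
      rw [← heq]
      exact hsm
    have hcont : Continuous G := by
      rw [hG]
      apply Continuous.fun_smul
      · exact Complex.continuous_exp.comp (by continuity)
      · exact (mvL w).continuous.comp
          (NormedSpace.exp_continuous.comp (continuous_id.smul continuous_const))
    have hFtc : ∫ u in (0:ℝ)..t, G u = F t - F 0 :=
      intervalIntegral.integral_eq_sub_of_hasDerivAt (fun u _ => hderiv u)
        (hcont.intervalIntegrable 0 t)
    have hF0 : F 0 = v := by
      simp [hF, Matrix.one_mulVec]
    -- bound on G
    set D : ℝ := Real.exp (-(z.re + β) * t) * (1 + C * t) ^ k * ‖w‖ with hD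
    have hGb : ∀ u ∈ Set.uIoc (0:ℝ) t, ‖G u‖ ≤ D := by
      intro u hu
      rw [Set.uIoc_of_le ht] at hu
      obtain ⟨hu0, hut⟩ := hu
      have hu0' : (0:ℝ) ≤ u := le_of_lt hu0
      have h1 : ‖G u‖ = Real.exp (-(u * z.re)) * ‖NormedSpace.exp (u • A) *ᵥ w‖ := by
        rw [hG]
        simp only []
        rw [norm_smul, Complex.norm_exp]
        congr 2
        simp [Complex.mul_re]
      rw [h1]
      have h2 := ihw u hu0'
      calc Real.exp (-(u * z.re)) * ‖NormedSpace.exp (u • A) *ᵥ w‖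
          ≤ Real.exp (-(u * z.re)) * (Real.exp (-β * u) * (1 + C * u) ^ k * ‖w‖) := by
            exact mul_le_mul_of_nonneg_left h2 (Real.exp_nonneg _)
        _ = Real.exp (-(u * z.re)) * Real.exp (-β * u) * ((1 + C * u) ^ k * ‖w‖) := by ring
        _ = Real.exp (-(z.re + β) * u) * ((1 + C * u) ^ k * ‖w‖) := by
            rw [← Real.exp_add]
            congr 2
            ring
        _ ≤ D := by
            rw [hD]
            have e1 : Real.exp (-(z.re + β) * u) ≤ Real.exp (-(z.re + β) * t) :=
              Real.exp_le_exp.mpr (by nlinarith)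
            have e2 : (1 + C * u) ^ k ≤ (1 + C * t) ^ k :=
              pow_le_pow_left₀ (by nlinarith) (by nlinarith) k
            calc Real.exp (-(z.re + β) * u) * ((1 + C * u) ^ k * ‖w‖)
                ≤ Real.exp (-(z.re + β) * t) * ((1 + C * t) ^ k * ‖w‖) := by
                  refine mul_le_mul e1 (mul_le_mul_of_nonneg_right e2 (norm_nonneg _)) ?_ ?_
                  · positivity
                  · positivity
              _ = Real.exp (-(z.re + β) * t) * (1 + C * t) ^ k * ‖w‖ := by ring
    have hInt : ‖∫ u in (0:ℝ)..t, G u‖ ≤ D * |t - 0| :=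
      intervalIntegral.norm_integral_le_of_norm_le_const hGb
    have hFt : ‖F t‖ ≤ ‖v‖ + D * t := by
      have h5 : F t = v + ∫ u in (0:ℝ)..t, G u := by rw [hFtc, hF0]; abel
      calc ‖F t‖ ≤ ‖v‖ + ‖∫ u in (0:ℝ)..t, G u‖ := by rw [h5]; exact norm_add_le _ _
        _ ≤ ‖v‖ + D * |t - 0| := (add_le_add_iff_left _).mpr hInt
        _ = ‖v‖ + D * t := by rw [sub_zero, abs_of_nonneg ht]
    have hXFt : NormedSpace.exp (t • A) *ᵥ v = Complex.exp ((t : ℂ) * z) • F t := by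
      rw [hF]
      simp only []
      rw [smul_smul, ← Complex.exp_add]
      norm_num
    have hnormX : ‖NormedSpace.exp (t • A) *ᵥ v‖ ≤ Real.exp (t * z.re) * (‖v‖ + D * t) := by
      rw [hXFt, norm_smul, Complex.norm_exp]
      have : ((t : ℂ) * z).re = t * z.re := by simp [Complex.mul_re]
      rw [this]
      exact mul_le_mul_of_nonneg_left hFt (Real.exp_nonneg _)
    -- final computation
    have hwnorm : ‖w‖ ≤ C * ‖v‖ := by
      refine (Matrix.linfty_opNorm_mulVec _ _).trans ?_
      exact mul_le_mul_of_nonneg_right hzC (norm_nonneg _)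
    have hcard : (z :: s).length = k + 1 := rfl
    rw [hcard]
    have hP1 : (1:ℝ) ≤ (1 + C * t) ^ k := one_le_pow₀ (by nlinarith)
    have he1 : Real.exp (t * z.re) ≤ Real.exp (-β * t) := by
      apply Real.exp_le_exp.mpr; nlinarith
    have he2 : Real.exp (t * z.re) * Real.exp (-(z.re + β) * t) = Real.exp (-β * t) := by
      rw [← Real.exp_add]; ring_nf
    have hepos : (0:ℝ) < Real.exp (-β * t) := Real.exp_pos _
    have hvn : (0:ℝ) ≤ ‖v‖ := norm_nonneg _
    calc ‖NormedSpace.exp (t • A) *ᵥ v‖ ≤ Real.exp (t * z.re) * (‖v‖ + D * t) := hnormX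
      _ = Real.exp (t * z.re) * ‖v‖
          + (Real.exp (t * z.re) * Real.exp (-(z.re + β) * t)) * (1 + C * t) ^ k * ‖w‖ * t := by
          rw [hD]; ring
      _ = Real.exp (t * z.re) * ‖v‖ + Real.exp (-β * t) * (1 + C * t) ^ k * ‖w‖ * t := by
          rw [he2]
      _ ≤ Real.exp (-β * t) * ‖v‖ + Real.exp (-β * t) * (1 + C * t) ^ k * (C * ‖v‖) * t := by
          gcongr
      _ ≤ Real.exp (-β * t) * (1 + C * t) ^ (k + 1) * ‖v‖ := by
          rw [pow_succ]
          nlinarith [mul_nonneg (mul_nonneg hepos.le hvn) (sub_nonneg.mpr hP1)]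



lemma pow_bound {C β t : ℝ} (k : ℕ) (hC : 0 ≤ C) (hβ : 0 < β) (ht : 0 ≤ t) :
    (1 + C * t) ^ k ≤ (1 + 2 * C * k / β) ^ k * Real.exp (β / 2 * t) := by
  rcases Nat.eq_zero_or_pos k with hk | hk
  · subst hk
    simpa using Real.one_le_exp (by positivity)
  · have hkpos : (0:ℝ) < k := by exact_mod_cast hk
    have hax : (2 * C * k / β) * (β / (2 * k) * t) = C * t := by
      field_simp
    have he := Real.add_one_le_exp (β / (2 * k) * t)
    have hxnn : 0 ≤ β / (2 * k) * t := by positivity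
    have hann : 0 ≤ 2 * C * k / β := by positivity
    have h1 : 1 + C * t ≤ (1 + 2 * C * k / β) * Real.exp (β / (2 * k) * t) := by
      nlinarith [mul_le_mul_of_nonneg_left he hann]
    calc (1 + C * t) ^ k ≤ ((1 + 2 * C * k / β) * Real.exp (β / (2 * k) * t)) ^ k :=
          pow_le_pow_left₀ (by nlinarith) h1 k
      _ = (1 + 2 * C * k / β) ^ k * Real.exp (β / (2 * k) * t) ^ k := mul_pow _ _ _
      _ = (1 + 2 * C * k / β) ^ k * Real.exp (β / 2 * t) := by
          rw [← Real.exp_nat_mul]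
          congr 2
          field_simp

lemma coprime_aux (a : ℂ) (t : Multiset ℂ) (h : ∀ b ∈ t, a ≠ b) :
    IsCoprime (X - C a) ((t.map fun b => X - C b).prod) := by
  induction t using Multiset.induction with
  | empty => simpa using isCoprime_one_right
  | cons b t ih =>
    rw [Multiset.map_cons, Multiset.prod_cons]
    exact (Polynomial.isCoprime_X_sub_C_of_isUnit_sub
      ((sub_ne_zero_of_ne (h b (Multiset.mem_cons_self b t))).isUnit)).mul_right
      (ih fun c hc => h c (Multiset.mem_cons_of_mem hc))

lemma coprime_prods (s t : Multiset ℂ) (h : ∀ a ∈ s, ∀ b ∈ t, a ≠ b) :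
    IsCoprime ((s.map fun a => X - C a).prod) ((t.map fun b => X - C b).prod) := by
  induction s using Multiset.induction with
  | empty => simpa using isCoprime_one_left
  | cons a s ih =>
    rw [Multiset.map_cons, Multiset.prod_cons]
    exact (coprime_aux a t (h a (Multiset.mem_cons_self a s))).mul_left
      (ih fun c hc => h c (Multiset.mem_cons_of_mem hc))

lemma prod_map_neg (l : List ℂ) (g : ℂ → Mat) :
    (l.map fun z => -(g z)).prod = ((-1 : ℂ) ^ l.length) • (l.map g).prod := by
  induction l with
  | nil => simp
  | cons a l ih =>
    rw [List.map_cons, List.prod_cons, List.map_cons, List.prod_cons, ih, mul_smul_comm,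
      List.length_cons, pow_succ, mul_comm ((-1:ℂ)^l.length), mul_smul, neg_one_smul]
    rw [neg_mul, smul_neg]

lemma aeval_list_prod (M : Mat) (l : List ℂ) :
    (Polynomial.aeval M) ((l.map fun z => X - C z).prod) = (l.map fun z => M - z • (1 : Mat)).prod := by
  rw [map_list_prod (Polynomial.aeval M : ℂ[X] →ₐ[ℂ] Mat), List.map_map]
  congr 1
  ext z
  simp [Function.comp, Algebra.algebraMap_eq_smul_one]

lemma multiset_prod_eq_list (s : Multiset ℂ) (f : ℂ → ℂ[X]) :
    (s.map f).prod = (s.toList.map f).prod := by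
  conv_lhs => rw [← Multiset.coe_toList s]
  rw [Multiset.map_coe, Multiset.prod_coe]


lemma forward_dir (hn : 1 ≤ n) (M : Mat)
    (P : Mat) (K α : ℝ) (hPP : P * P = P) (hPM : P * M = M * P) (hK : 1 ≤ K) (hα : 0 < α)
    (hpos : ∀ t : ℝ, 0 ≤ t → ‖NormedSpace.exp (t • M) * P‖ ≤ K * Real.exp (-α * t))
    (hneg : ∀ t : ℝ, t ≤ 0 → ‖NormedSpace.exp (t • M) * (1 - P)‖ ≤ K * Real.exp (α * t))
    (z : ℂ) (hdet : (z • (1 : Mat) - M).det = 0) : z.re ≠ 0 := by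
  intro hre
  obtain ⟨v, hv0, hvz⟩ := (Matrix.exists_mulVec_eq_zero_iff).mpr hdet
  have hMv : M *ᵥ v = z • v := by
    rw [Matrix.sub_mulVec, sub_eq_zero] at hvz
    rw [← hvz, Matrix.smul_mulVec, Matrix.one_mulVec]
  have hexp : ∀ t : ℝ, NormedSpace.exp (t • M) *ᵥ v = Complex.exp ((t : ℂ) * z) • v := by
    intro t
    apply exp_mulVec_eigen
    rw [Matrix.smul_mulVec, hMv]
    funext i
    simp [Complex.real_smul]
    ring
  have habs : ∀ t : ℝ, ‖Complex.exp ((t : ℂ) * z)‖ = 1 := by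
    intro t
    rw [Complex.norm_exp]
    have : ((t : ℂ) * z).re = t * z.re := by simp [Complex.mul_re]
    rw [this, hre, mul_zero, Real.exp_zero]
  -- P part
  have hPv : P *ᵥ v = 0 := by
    have hb : ∀ t : ℝ, 0 ≤ t → ‖P *ᵥ v‖ ≤ K * Real.exp (-α * t) * ‖v‖ := by
      intro t ht
      have hcomm : P * NormedSpace.exp (t • M) = NormedSpace.exp (t • M) * P :=
        (((show Commute P M from hPM).smul_right t).exp_right).eq
      have h1 : (NormedSpace.exp (t • M) * P) *ᵥ v = Complex.exp ((t : ℂ) * z) • (P *ᵥ v) := by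
        rw [← hcomm, ← Matrix.mulVec_mulVec, hexp t, Matrix.mulVec_smul]
      have h2 : ‖P *ᵥ v‖ = ‖(NormedSpace.exp (t • M) * P) *ᵥ v‖ := by
        rw [h1, norm_smul, habs, one_mul]
      rw [h2]
      exact le_trans (Matrix.linfty_opNorm_mulVec _ _)
        (mul_le_mul_of_nonneg_right (hpos t ht) (norm_nonneg _))
    have h3 : Filter.Tendsto (fun t : ℝ => -α * t) Filter.atTop Filter.atBot :=
      Filter.Tendsto.const_mul_atTop_of_neg (by linarith) Filter.tendsto_id
    have hlim : Filter.Tendsto (fun t : ℝ => K * Real.exp (-α * t) * ‖v‖)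
        Filter.atTop (nhds 0) := by
      have h4 := ((Real.tendsto_exp_atBot.comp h3).const_mul K).mul_const ‖v‖
      simpa using h4
    have h5 : ‖P *ᵥ v‖ ≤ 0 :=
      ge_of_tendsto hlim (Filter.eventually_atTop.mpr ⟨0, fun t ht => hb t ht⟩)
    exact norm_le_zero_iff.mp h5
  -- (1 - P) part
  have hQv : ((1 : Mat) - P) *ᵥ v = 0 := by
    have hb : ∀ t : ℝ, t ≤ 0 → ‖((1 : Mat) - P) *ᵥ v‖ ≤ K * Real.exp (α * t) * ‖v‖ := by
      intro t ht
      have hQM : Commute ((1 : Mat) - P) M := (Commute.one_left M).sub_left hPM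
      have hcomm : ((1 : Mat) - P) * NormedSpace.exp (t • M)
          = NormedSpace.exp (t • M) * ((1 : Mat) - P) :=
        ((hQM.smul_right t).exp_right).eq
      have h1 : (NormedSpace.exp (t • M) * ((1 : Mat) - P)) *ᵥ v
          = Complex.exp ((t : ℂ) * z) • (((1 : Mat) - P) *ᵥ v) := by
        rw [← hcomm, ← Matrix.mulVec_mulVec, hexp t, Matrix.mulVec_smul]
      have h2 : ‖((1 : Mat) - P) *ᵥ v‖ = ‖(NormedSpace.exp (t • M) * ((1 : Mat) - P)) *ᵥ v‖ := by
        rw [h1, norm_smul, habs, one_mul]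
      rw [h2]
      exact le_trans (Matrix.linfty_opNorm_mulVec _ _)
        (mul_le_mul_of_nonneg_right (hneg t ht) (norm_nonneg _))
    have h3 : Filter.Tendsto (fun t : ℝ => α * t) Filter.atBot Filter.atBot :=
      Filter.Tendsto.const_mul_atBot hα Filter.tendsto_id
    have hlim : Filter.Tendsto (fun t : ℝ => K * Real.exp (α * t) * ‖v‖)
        Filter.atBot (nhds 0) := by
      have h4 := ((Real.tendsto_exp_atBot.comp h3).const_mul K).mul_const ‖v‖
      simpa using h4
    have h5 : ‖((1 : Mat) - P) *ᵥ v‖ ≤ 0 :=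
      ge_of_tendsto hlim (Filter.eventually_atBot.mpr ⟨0, fun t ht => hb t ht⟩)
    exact norm_le_zero_iff.mp h5
  apply hv0
  have : ((1 : Mat)) *ᵥ v = v := Matrix.one_mulVec v
  have hsplit : ((1 : Mat)) *ᵥ v = P *ᵥ v + ((1 : Mat) - P) *ᵥ v := by
    rw [← Matrix.add_mulVec, add_sub_cancel]
  rw [this] at hsplit
  rw [hsplit, hPv, hQv, add_zero]


lemma reverse_dir (hn : 1 ≤ n) (M : Mat)
    (hspec : ∀ z : ℂ, (z • (1 : Mat) - M).det = 0 → z.re ≠ 0) :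
    ∃ (P : Mat) (K α : ℝ),
      P * P = P ∧ P * M = M * P ∧ 1 ≤ K ∧ 0 < α ∧
      (∀ t : ℝ, 0 ≤ t → ‖NormedSpace.exp (t • M) * P‖ ≤ K * Real.exp (-α * t)) ∧
      (∀ t : ℝ, t ≤ 0 → ‖NormedSpace.exp (t • M) * (1 - P)‖ ≤ K * Real.exp (α * t)) := by
  classical
  have hmono := Matrix.charpoly_monic M
  have hsplit : (Matrix.charpoly M).Splits := IsAlgClosed.splits _
  have hdeg : (Matrix.charpoly M).natDegree = n := by
    rw [Matrix.charpoly_natDegree_eq_dim]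
    exact Fintype.card_fin n
  have hcard : Multiset.card (Matrix.charpoly M).roots = n := by
    rw [splits_iff_card_roots.mp hsplit, hdeg]
  set rts := (Matrix.charpoly M).roots with hrtsdef
  have hrne : rts ≠ 0 := by
    intro h0
    rw [h0] at hcard
    simp at hcard
    omega
  have hroot : ∀ z ∈ rts, z.re ≠ 0 := by
    intro z hz
    apply hspec
    rw [← eval_charpoly]
    exact (Polynomial.mem_roots'.mp hz).2
  set rs := rts.filter (fun z => z.re < 0) with hrs
  set ru := rts.filter (fun z => ¬ z.re < 0) with hru
  have hrsru : rs + ru = rts := Multiset.filter_add_not _ _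
  set ps := (rs.map fun z => X - C z).prod with hps
  set pu := (ru.map fun z => X - C z).prod with hpu
  have hchi : ps * pu = Matrix.charpoly M := by
    rw [hps, hpu, ← Multiset.prod_add, ← Multiset.map_add, hrsru]
    exact (hsplit.eq_prod_roots_of_monic hmono).symm
  have hcop : IsCoprime ps pu := by
    apply coprime_prods
    intro a ha b hb hab
    subst hab
    exact (Multiset.mem_filter.mp hb).2 (Multiset.mem_filter.mp ha).2
  obtain ⟨pa, pb, hbez⟩ := hcop
  set P : Mat := Polynomial.aeval M (pb * pu) with hP
  have hCH : Polynomial.aeval M (Matrix.charpoly M) = 0 := Matrix.aeval_self_charpoly M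
  have h1P : (1 : Mat) - P = Polynomial.aeval M (pa * ps) := by
    have h := congrArg (Polynomial.aeval M) hbez
    rw [map_add, map_one] at h
    rw [hP, ← h]
    abel
  have hPM : P * M = M * P := by
    rw [hP]
    calc Polynomial.aeval M (pb * pu) * M
        = Polynomial.aeval M (pb * pu) * Polynomial.aeval M X := by rw [Polynomial.aeval_X]
      _ = Polynomial.aeval M ((pb * pu) * X) := (map_mul _ _ _).symm
      _ = Polynomial.aeval M (X * (pb * pu)) := by rw [mul_comm]
      _ = M * Polynomial.aeval M (pb * pu) := by rw [map_mul, Polynomial.aeval_X]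
  have hPP : P * P = P := by
    have hz : P * ((1 : Mat) - P) = 0 := by
      rw [hP, h1P, ← map_mul]
      have h : (pb * pu) * (pa * ps) = (pb * pa) * (ps * pu) := by ring
      rw [h, hchi, map_mul, hCH, mul_zero]
    rw [mul_sub, mul_one, sub_eq_zero] at hz
    exact hz.symm
  have hannS : Polynomial.aeval M ps * P = 0 := by
    rw [hP, ← map_mul]
    have h : ps * (pb * pu) = pb * (ps * pu) := by ring
    rw [h, hchi, map_mul, hCH, mul_zero]
  have hannU : Polynomial.aeval M pu * ((1 : Mat) - P) = 0 := by
    rw [h1P, ← map_mul]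
    have h : pu * (pa * ps) = pa * (ps * pu) := by ring
    rw [h, hchi, map_mul, hCH, mul_zero]
  -- constants
  have hrtsFin : rts.toFinset.Nonempty := by
    rw [Multiset.toFinset_nonempty]
    exact hrne
  set β : ℝ := rts.toFinset.inf' hrtsFin (fun z => |z.re|) with hβ
  have hβpos : 0 < β := by
    rw [hβ, Finset.lt_inf'_iff]
    intro z hz
    exact abs_pos.mpr (hroot z (Multiset.mem_toFinset.mp hz))
  have hβle : ∀ z ∈ rts, β ≤ |z.re| := fun z hz =>
    Finset.inf'_le _ (Multiset.mem_toFinset.mpr hz)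
  set Cc : ℝ := rts.toFinset.sup' hrtsFin (fun z => ‖M - z • (1 : Mat)‖) with hCc
  have hCle : ∀ z ∈ rts, ‖M - z • (1 : Mat)‖ ≤ Cc := fun z hz =>
    Finset.le_sup' (f := fun z => ‖M - z • (1 : Mat)‖) (Multiset.mem_toFinset.mpr hz)
  have hCnn : 0 ≤ Cc := by
    obtain ⟨z, hz⟩ := hrtsFin
    exact le_trans (norm_nonneg (M - z • (1 : Mat)))
      (Finset.le_sup' (f := fun z => ‖M - z • (1 : Mat)‖) hz)
  set ls := rs.toList with hls
  set lu := ru.toList with hlu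
  set ks := ls.length with hks
  set ku := lu.length with hku
  -- hypotheses for keyA, stable side
  have hlsH : ∀ z ∈ ls, z.re ≤ -β ∧ ‖M - z • (1 : Mat)‖ ≤ Cc := by
    intro z hz
    have hz' : z ∈ rs := by rwa [← Multiset.mem_toList]
    have hz1 := Multiset.mem_filter.mp hz'
    constructor
    · have := hβle z hz1.1
      rw [abs_of_neg hz1.2] at this
      linarith
    · exact hCle z hz1.1
  -- hypotheses for keyA, unstable side (for -M)
  have hluH : ∀ z ∈ lu.map Neg.neg, z.re ≤ -β ∧ ‖(-M) - z • (1 : Mat)‖ ≤ Cc := by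
    intro z hz
    obtain ⟨w, hw, rfl⟩ := List.mem_map.mp hz
    have hw' : w ∈ ru := by rwa [← Multiset.mem_toList]
    have hw1 := Multiset.mem_filter.mp hw'
    have hwre : 0 < w.re := lt_of_le_of_ne (not_lt.mp hw1.2) (Ne.symm (hroot w hw1.1))
    have hnegeq : (-M) - (-w) • (1 : Mat) = -(M - w • (1 : Mat)) := by
      rw [neg_smul]
      abel
    constructor
    · have := hβle w hw1.1
      rw [abs_of_pos hwre] at this
      simp only [Complex.neg_re]
      linarith
    · rw [hnegeq, norm_neg]
      exact hCle w hw1.1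
  -- vanishing
  have hvanS : ∀ u : Fin n → ℂ, (ls.map fun z => M - z • (1 : Mat)).prod *ᵥ (P *ᵥ u) = 0 := by
    intro u
    rw [Matrix.mulVec_mulVec]
    have heq : (ls.map fun z => M - z • (1 : Mat)).prod = Polynomial.aeval M ps := by
      rw [← aeval_list_prod, hps, multiset_prod_eq_list]
    rw [heq, hannS, Matrix.zero_mulVec]
  have hvanU : ∀ u : Fin n → ℂ,
      ((lu.map Neg.neg).map fun z => (-M) - z • (1 : Mat)).prod *ᵥ (((1 : Mat) - P) *ᵥ u) = 0 := by
    intro u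
    have h1 : ((lu.map Neg.neg).map fun z => (-M) - z • (1 : Mat)).prod
        = ((-1 : ℂ) ^ lu.length) • (lu.map fun z => M - z • (1 : Mat)).prod := by
      rw [List.map_map]
      have h2 : List.map ((fun z => (-M) - z • (1 : Mat)) ∘ Neg.neg) lu
          = List.map (fun z => -(M - z • (1 : Mat))) lu :=
        List.map_congr_left fun z _ => by
          simp only [Function.comp_apply, neg_smul]
          abel
      rw [h2, prod_map_neg]
    rw [h1, Matrix.smul_mulVec, Matrix.mulVec_mulVec]
    have heq : (lu.map fun z => M - z • (1 : Mat)).prod = Polynomial.aeval M pu := by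
      rw [← aeval_list_prod, hpu, multiset_prod_eq_list]
    rw [heq, hannU, Matrix.zero_mulVec, smul_zero]
  -- constants K
  set Ks : ℝ := n * ((1 + 2 * Cc * ks / β) ^ ks) * ‖P‖ with hKs
  set Ku : ℝ := n * ((1 + 2 * Cc * ku / β) ^ ku) * ‖(1 : Mat) - P‖ with hKu
  have hbase_s : (0:ℝ) ≤ 1 + 2 * Cc * ks / β := by positivity
  have hbase_u : (0:ℝ) ≤ 1 + 2 * Cc * ku / β := by positivity
  have hKs0 : 0 ≤ Ks := by positivity
  have hKu0 : 0 ≤ Ku := by positivity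
  refine ⟨P, 1 + Ks + Ku, β / 2, hPP, hPM, by linarith, by positivity, ?_, ?_⟩
  · -- t ≥ 0
    intro t ht
    have hcol : ∀ j : Fin n, ‖(NormedSpace.exp (t • M) * P) *ᵥ Pi.single j 1‖ ≤
        Real.exp (-β * t) * (1 + Cc * t) ^ ks * ‖P‖ := by
      intro j
      rw [← Matrix.mulVec_mulVec]
      refine (keyA M β Cc hCnn ls hlsH (P *ᵥ Pi.single j 1) (hvanS _) t ht).trans ?_
      have h6 : ‖P *ᵥ Pi.single j 1‖ ≤ ‖P‖ := by
        refine (Matrix.linfty_opNorm_mulVec _ _).trans ?_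
        rw [Pi.norm_single, norm_one, mul_one]
      exact mul_le_mul_of_nonneg_left h6 (by positivity)
    calc ‖NormedSpace.exp (t • M) * P‖
        ≤ ∑ j, ‖(NormedSpace.exp (t • M) * P) *ᵥ Pi.single j 1‖ := norm_le_sum_cols _
      _ ≤ ∑ _j : Fin n, (Real.exp (-β * t) * (1 + Cc * t) ^ ks * ‖P‖) :=
          Finset.sum_le_sum (fun j _ => hcol j)
      _ = n * (Real.exp (-β * t) * (1 + Cc * t) ^ ks * ‖P‖) := by
          rw [Finset.sum_const, Finset.card_univ, Fintype.card_fin, nsmul_eq_mul]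
      _ ≤ n * (Real.exp (-β * t) * ((1 + 2 * Cc * ks / β) ^ ks * Real.exp (β / 2 * t)) * ‖P‖) := by
          have hpb := pow_bound (C := Cc) (β := β) (t := t) ks hCnn hβpos ht
          have hn0 : (0:ℝ) ≤ n := by positivity
          have := mul_le_mul_of_nonneg_left hpb (Real.exp_nonneg (-β * t))
          nlinarith [norm_nonneg P, mul_le_mul_of_nonneg_right this (norm_nonneg P)]
      _ = Ks * (Real.exp (-β * t) * Real.exp (β / 2 * t)) := by rw [hKs]; ring
      _ = Ks * Real.exp (-(β / 2) * t) := by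
          rw [← Real.exp_add]
          congr 2
          ring
      _ ≤ (1 + Ks + Ku) * Real.exp (-(β / 2) * t) := by
          have := Real.exp_nonneg (-(β / 2) * t)
          nlinarith
  · -- t ≤ 0
    intro t ht
    have hts : t • M = (-t) • (-M) := by rw [smul_neg, neg_smul, neg_neg]
    have hmt : 0 ≤ -t := by linarith
    have hcol : ∀ j : Fin n, ‖(NormedSpace.exp (t • M) * ((1 : Mat) - P)) *ᵥ Pi.single j 1‖ ≤
        Real.exp (-β * (-t)) * (1 + Cc * (-t)) ^ ku * ‖(1 : Mat) - P‖ := by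
      intro j
      rw [← Matrix.mulVec_mulVec, hts]
      have hlen : (lu.map Neg.neg).length = ku := by rw [List.length_map]
      have hkey := keyA (-M) β Cc hCnn (lu.map Neg.neg) hluH
        (((1 : Mat) - P) *ᵥ Pi.single j 1) (hvanU _) (-t) hmt
      rw [hlen] at hkey
      refine hkey.trans ?_
      have h6 : ‖((1 : Mat) - P) *ᵥ Pi.single j 1‖ ≤ ‖(1 : Mat) - P‖ := by
        refine (Matrix.linfty_opNorm_mulVec _ _).trans ?_
        rw [Pi.norm_single, norm_one, mul_one]
      exact mul_le_mul_of_nonneg_left h6 (by positivity)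
    calc ‖NormedSpace.exp (t • M) * ((1 : Mat) - P)‖
        ≤ ∑ j, ‖(NormedSpace.exp (t • M) * ((1 : Mat) - P)) *ᵥ Pi.single j 1‖ :=
          norm_le_sum_cols _
      _ ≤ ∑ _j : Fin n, (Real.exp (-β * (-t)) * (1 + Cc * (-t)) ^ ku * ‖(1 : Mat) - P‖) :=
          Finset.sum_le_sum (fun j _ => hcol j)
      _ = n * (Real.exp (-β * (-t)) * (1 + Cc * (-t)) ^ ku * ‖(1 : Mat) - P‖) := by
          rw [Finset.sum_const, Finset.card_univ, Fintype.card_fin, nsmul_eq_mul]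
      _ ≤ n * (Real.exp (-β * (-t)) * ((1 + 2 * Cc * ku / β) ^ ku * Real.exp (β / 2 * (-t)))
            * ‖(1 : Mat) - P‖) := by
          have hpb := pow_bound (C := Cc) (β := β) (t := -t) ku hCnn hβpos hmt
          have := mul_le_mul_of_nonneg_left hpb (Real.exp_nonneg (-β * (-t)))
          nlinarith [norm_nonneg ((1 : Mat) - P),
            mul_le_mul_of_nonneg_right this (norm_nonneg ((1 : Mat) - P))]
      _ = Ku * (Real.exp (-β * (-t)) * Real.exp (β / 2 * (-t))) := by rw [hKu]; ring
      _ = Ku * Real.exp (β / 2 * t) := by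
          rw [← Real.exp_add]
          congr 2
          ring
      _ ≤ (1 + Ks + Ku) * Real.exp (β / 2 * t) := by
          have := Real.exp_nonneg (β / 2 * t)
          nlinarith


end ExpDich

end ExpDichAux

/-- The constant-coefficient linear system `X' = MX` admits an exponential dichotomy on ℝ
iff every spectral point of `M` (i.e. every `z` with `det (z • 1 - M) = 0`) has nonzero
real part. -/
theorem stmt_0 (n : ℕ) (hn : 1 ≤ n) (M : Matrix (Fin n) (Fin n) ℂ) :
    (∃ (P : Matrix (Fin n) (Fin n) ℂ) (K α : ℝ),
      P * P = P ∧ P * M = M * P ∧ 1 ≤ K ∧ 0 < α ∧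
      (∀ t : ℝ, 0 ≤ t → ‖NormedSpace.exp (t • M) * P‖ ≤ K * Real.exp (-α * t)) ∧
      (∀ t : ℝ, t ≤ 0 → ‖NormedSpace.exp (t • M) * (1 - P)‖ ≤ K * Real.exp (α * t))) ↔
    (∀ z : ℂ, (z • (1 : Matrix (Fin n) (Fin n) ℂ) - M).det = 0 → z.re ≠ 0) := by
  constructor
  · rintro ⟨P, K, α, hPP, hPM, hK, hα, hpos, hneg⟩ z hdet
    exact ExpDich.forward_dir hn M P K α hPP hPM hK hα hpos hneg z hdet
  · intro hspec
    exact ExpDich.reverse_dir hn M hspec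
end

section
/- Let V ⊆ ℂ be open, let U ⊆ ℂ be a nonempty bounded open set whose closure is contained in V, and let f : ℂ × ℝ → ℂ be continuous on V × [0,1] such that for each t ∈ [0,1] the map z ↦ f(z,t) is analytic on V. Assume f(z,t) ≠ 0 for every z in the frontier of U and every t ∈ [0,1]. Then for each t ∈ [0,1] the zero set Z(t) = {z ∈ U : f(z,t) = 0} is finite, and the total number of zeros counted with multiplicity, N(t) = Σ_{z ∈ Z(t)} ord_z(f(·,t)), is the same for all t ∈ [0,1], where ord_z(f(·,t)) denotes the order of vanishing of the analytic function z ↦ f(z,t) at z. -/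
open Set Metric Filter Complex Topology


/-- If `g` is analytic on a neighborhood of the closure of a bounded open set `U`
and nonvanishing on the frontier of `U`, then `g` is not eventually zero at any point of `U`. -/
lemma not_eventually_zero {W U : Set ℂ} (hU : IsOpen U)
    (hUb : Bornology.IsBounded U) (hUW : closure U ⊆ W) {g : ℂ → ℂ}
    (hg : AnalyticOnNhd ℂ g W) (hfr : ∀ z ∈ frontier U, g z ≠ 0)
    {z : ℂ} (hz : z ∈ U) : ¬ (∀ᶠ w in 𝓝 z, g w = 0) := by
  intro h0
  set C := connectedComponentIn U z with hC
  have hCU : C ⊆ U := connectedComponentIn_subset U z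
  have hzC : z ∈ C := mem_connectedComponentIn hz
  have hCopen : IsOpen C := hU.connectedComponentIn
  have hCpre : IsPreconnected C := isPreconnected_connectedComponentIn
  have hCW : C ⊆ W := fun x hx => hUW (subset_closure (hCU hx))
  have heq : EqOn g 0 C := by
    refine (hg.mono hCW).eqOn_zero_of_preconnected_of_eventuallyEq_zero hCpre hzC ?_
    exact h0
  -- frontier of C is nonempty
  have hfrC : (frontier C).Nonempty := by
    by_contra hfe
    rw [Set.not_nonempty_iff_eq_empty] at hfe
    have hclopen : IsClopen C := isClopen_iff_frontier_eq_empty.mpr hfe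
    rcases isClopen_iff.mp hclopen with h | h
    · exact (h ▸ hzC : z ∈ (∅ : Set ℂ))
    · have : Bornology.IsBounded (Set.univ : Set ℂ) := (h ▸ (hUb.subset hCU))
      rw [Metric.isBounded_iff] at this
      obtain ⟨r, hr⟩ := this
      have := hr (Set.mem_univ (0 : ℂ)) (Set.mem_univ ((|r| + 1 : ℝ) : ℂ))
      simp only [dist_zero_left] at this
      rw [Complex.norm_real] at this
      rw [Real.norm_eq_abs, _root_.abs_of_nonneg (by positivity : (0:ℝ) ≤ |r| + 1)] at this
      nlinarith [abs_nonneg r, le_abs_self r]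
  obtain ⟨x, hx⟩ := hfrC
  have hxcl : x ∈ closure C := frontier_subset_closure hx
  have hxU' : x ∈ closure U := closure_mono hCU hxcl
  have hxnotU : x ∉ U := by
    intro hxU
    have hxC : x ∈ C := by
      obtain ⟨y, hy1, hy2⟩ := mem_closure_iff_nhds.mp hxcl _
        ((hU.connectedComponentIn).mem_nhds (mem_connectedComponentIn hxU))
      show x ∈ connectedComponentIn U z
      rw [connectedComponentIn_eq (show y ∈ connectedComponentIn U z from hy2),
        ← connectedComponentIn_eq hy1]
      exact mem_connectedComponentIn hxU
    rw [hCopen.frontier_eq] at hx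
    exact hx.2 hxC
  have hxfr : x ∈ frontier U := by
    rw [hU.frontier_eq]
    exact ⟨hxU', hxnotU⟩
  have hgx : g x = 0 := by
    have hcw : ContinuousWithinAt g C x := ((hg x (hUW hxU')).continuousAt).continuousWithinAt
    have := hcw.mem_closure_image hxcl
    have himg : g '' C ⊆ {0} := by
      rintro _ ⟨y, hy, rfl⟩; exact heq hy
    have : g x ∈ closure ({0} : Set ℂ) := closure_mono himg this
    simpa using this
  exact hfr x hxfr hgx

lemma zero_set_finite {W U : Set ℂ} (hU : IsOpen U)
    (hUb : Bornology.IsBounded U) (hUW : closure U ⊆ W) {g : ℂ → ℂ}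
    (hg : AnalyticOnNhd ℂ g W) (hfr : ∀ z ∈ frontier U, g z ≠ 0) :
    {z ∈ U | g z = 0}.Finite := by
  by_contra hinf
  rw [← Set.not_infinite, not_not] at hinf
  obtain ⟨x, hxK, hacc⟩ := hinf.exists_accPt_of_subset_isCompact hUb.isCompact_closure
    (fun z hz => subset_closure hz.1)
  have hfreq : ∃ᶠ y in 𝓝[≠] x, g y = 0 := by
    have h1 := accPt_iff_frequently.mp hacc
    rw [frequently_nhdsWithin_iff]
    exact h1.mono fun y hy => ⟨hy.2.2, hy.1⟩
  have hxW : x ∈ W := hUW hxK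
  have hgx : g x = 0 := by
    have hcl : x ∈ closure {z ∈ U | g z = 0} := by
      rw [mem_closure_iff_clusterPt]
      exact hacc.clusterPt
    have hcw : ContinuousWithinAt g {z ∈ U | g z = 0} x :=
      ((hg x hxW).continuousAt).continuousWithinAt
    have := hcw.mem_closure_image hcl
    have himg : g '' {z ∈ U | g z = 0} ⊆ {0} := by
      rintro _ ⟨y, hy, rfl⟩; exact hy.2
    have : g x ∈ closure ({0} : Set ℂ) := closure_mono himg this
    simpa using this
  have hxU : x ∈ U := by
    rcases (mem_closure_iff_nhds.mp hxK) with _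
    by_contra hxnU
    exact hfr x (by rw [hU.frontier_eq]; exact ⟨hxK, hxnU⟩) hgx
  have hev : ∀ᶠ w in 𝓝 x, g w = 0 :=
    (hg x hxW).frequently_zero_iff_eventually_zero.mp hfreq
  exact not_eventually_zero hU hUb hUW hg hfr hxU hev


lemma circleIntegral_add' {f g : ℂ → ℂ} {c : ℂ} {R : ℝ} (hf : CircleIntegrable f c R)
    (hg : CircleIntegrable g c R) :
    (∮ z in C(c, R), (f z + g z)) = (∮ z in C(c, R), f z) + ∮ z in C(c, R), g z := by
  simp only [circleIntegral, smul_add, intervalIntegral.integral_add hf.out hg.out]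

/-- The argument principle for a disk, by induction on the number of zeros counted
with multiplicity. -/
lemma argument_principle {W : Set ℂ} (hW : IsOpen W) {c : ℂ} {R : ℝ} (hR : 0 < R)
    (hB : closedBall c R ⊆ W) :
    ∀ (n : ℕ) (g : ℂ → ℂ), AnalyticOnNhd ℂ g W → (∀ w ∈ sphere c R, g w ≠ 0) →
    ∀ (Z : Finset ℂ) (ord : ℂ → ℕ), (↑Z = {z ∈ ball c R | g z = 0}) →
    (∀ z ∈ Z, ∃ h : ℂ → ℂ, AnalyticAt ℂ h z ∧ h z ≠ 0 ∧
      ∀ᶠ w in 𝓝 z, g w = (w - z) ^ ord z * h w) →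
    (∑ z ∈ Z, ord z = n) →
    (∮ z in C(c, R), deriv g z / g z) = 2 * Real.pi * Complex.I * n := by
  intro n
  induction n with
  | zero =>
    intro g hg hgs Z ord hZ hord hsum
    -- no zeros: `Z` must be empty
    have hZe : Z = ∅ := by
      by_contra hne
      obtain ⟨z₀, hz₀⟩ := Finset.nonempty_of_ne_empty hne
      have hz₀' : z₀ ∈ {z ∈ ball c R | g z = 0} := by rw [← hZ]; exact_mod_cast hz₀
      obtain ⟨h, _, hh0, hev⟩ := hord z₀ hz₀
      have hm : ord z₀ = 0 := by
        have := Finset.sum_eq_zero_iff.mp hsum z₀ hz₀; exact this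
      have hsz := hev.self_of_nhds
      rw [hm, pow_zero, one_mul] at hsz
      exact hh0 (by rw [← hsz]; exact hz₀'.2)
    have hball : ∀ z ∈ ball c R, g z ≠ 0 := by
      intro z hz hg0
      have : z ∈ (Z : Set ℂ) := by rw [hZ]; exact ⟨hz, hg0⟩
      simp [hZe] at this
    have hcb : ∀ z ∈ closedBall c R, g z ≠ 0 := by
      intro z hz
      rcases lt_or_eq_of_le (mem_closedBall.mp hz) with h | h
      · exact hball z (mem_ball.mpr h)
      · exact hgs z (mem_sphere.mpr h)
    have hres : (∮ z in C(c, R), deriv g z / g z) = 0 := by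
      refine Complex.circleIntegral_eq_zero_of_differentiable_on_off_countable hR.le
        Set.countable_empty ?_ ?_
      · exact ((hg.deriv.continuousOn).mono (fun z hz => hB hz)).div
          ((hg.continuousOn).mono (fun z hz => hB hz)) (fun z hz => hcb z hz)
      · intro z hz
        rw [Set.diff_empty] at hz
        exact ((hg.deriv z (hB (ball_subset_closedBall hz))).differentiableAt).div
          ((hg z (hB (ball_subset_closedBall hz))).differentiableAt)
          (hcb z (ball_subset_closedBall hz))
    rw [hres]; simp
  | succ n ih =>
    intro g hg hgs Z ord hZ hord hsum
    have hZne : Z.Nonempty := by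
      rcases Finset.eq_empty_or_nonempty Z with h | h
      · subst h; simp at hsum
      · exact h
    obtain ⟨z₀, hz₀⟩ := hZne
    have hz₀' : z₀ ∈ {z ∈ ball c R | g z = 0} := by rw [← hZ]; exact_mod_cast hz₀
    have hz₀b : z₀ ∈ ball c R := hz₀'.1
    have hgz₀ : g z₀ = 0 := hz₀'.2
    obtain ⟨h₀, hh₀an, hh₀0, hev₀⟩ := hord z₀ hz₀
    set m₀ := ord z₀ with hm₀
    have hm₀pos : 1 ≤ m₀ := by
      by_contra hlt
      have hz : m₀ = 0 := by omega
      have hsz := hev₀.self_of_nhds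
      rw [hgz₀, hz, pow_zero, one_mul] at hsz
      exact hh₀0 hsz.symm
    -- the function with one zero removed
    set g₁ : ℂ → ℂ := fun w => if w = z₀ then (if m₀ = 1 then h₀ z₀ else 0)
      else g w / (w - z₀) with hg₁def
    have hkey : ∀ w, g w = (w - z₀) * g₁ w := by
      intro w
      by_cases hw : w = z₀
      · subst hw; simp [hg₁def, hgz₀]
      · simp only [hg₁def, if_neg hw]
        rw [mul_div_cancel₀ _ (sub_ne_zero.mpr hw)]
    have hg₁loc : g₁ =ᶠ[𝓝 z₀] fun w => (w - z₀) ^ (m₀ - 1) * h₀ w := by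
      filter_upwards [hev₀] with w hw
      by_cases hwz : w = z₀
      · subst hwz
        simp only [hg₁def, if_pos rfl, sub_self]
        rcases Nat.eq_or_lt_of_le hm₀pos with h1 | h1
        · have hm1 : m₀ = 1 := h1.symm
          rw [if_pos hm1, hm1]
          norm_num
        · rw [if_neg (by omega), zero_pow (by omega), zero_mul]
      · simp only [hg₁def, if_neg hwz]
        rw [hw]
        have : (w - z₀) ^ m₀ = (w - z₀) ^ (m₀ - 1) * (w - z₀) := by
          conv_lhs => rw [show m₀ = (m₀ - 1) + 1 by omega]
          rw [pow_succ]
        rw [this, mul_right_comm, mul_div_assoc, div_self (sub_ne_zero.mpr hwz), mul_one]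
    have hg₁ : AnalyticOnNhd ℂ g₁ W := by
      intro w hw
      by_cases hwz : w = z₀
      · subst hwz
        exact ((((analyticAt_id.sub analyticAt_const).pow _).mul hh₀an)).congr hg₁loc.symm
      · have hev : (fun w => g w / (w - z₀)) =ᶠ[𝓝 w] g₁ := by
          filter_upwards [eventually_ne_nhds hwz] with x hx
          simp [hg₁def, if_neg hx]
        exact (((hg w hw)).div (analyticAt_id.sub analyticAt_const)
          (sub_ne_zero.mpr hwz)).congr hev
    have hg₁s : ∀ w ∈ sphere c R, g₁ w ≠ 0 := by
      intro w hws h0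
      exact hgs w hws (by rw [hkey w, h0, mul_zero])
    -- new zero data
    set Z₁ : Finset ℂ := if m₀ = 1 then Z.erase z₀ else Z with hZ₁def
    set ord₁ : ℂ → ℕ := Function.update ord z₀ (m₀ - 1) with hord₁def
    have hz₀sph : z₀ ∉ sphere c R := by
      intro h; exact absurd (mem_ball.mp hz₀b) (by simp [mem_sphere.mp h])
    have hg₁z₀ : g₁ z₀ = (if m₀ = 1 then h₀ z₀ else 0) := by rw [hg₁def]; simp
    have hZ₁ : ↑Z₁ = {z ∈ ball c R | g₁ z = 0} := by
      ext w
      simp only [mem_setOf_eq]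
      by_cases hwz : w = z₀
      · subst hwz
        by_cases h1 : m₀ = 1
        · have hZ₁e : Z₁ = Z.erase w := by rw [hZ₁def, if_pos h1]
          have hne : g₁ w ≠ 0 := by rw [hg₁z₀, if_pos h1]; exact hh₀0
          simp [hZ₁e, hne]
        · have hZ₁e : Z₁ = Z := by rw [hZ₁def, if_neg h1]
          have heq0 : g₁ w = 0 := by rw [hg₁z₀, if_neg h1]
          simp [hZ₁e, heq0, hz₀, hz₀b]
      · have hg₁w : g₁ w = g w / (w - z₀) := by rw [hg₁def]; simp [hwz]
        have hmem : w ∈ (Z₁ : Set ℂ) ↔ w ∈ (Z : Set ℂ) := by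
          by_cases h1 : m₀ = 1 <;> simp [hZ₁def, h1, hwz]
        rw [hmem]
        rw [show (w ∈ (Z : Set ℂ)) ↔ (w ∈ ball c R ∧ g w = 0) from by rw [hZ]; rfl]
        rw [hg₁w, div_eq_zero_iff]
        have hne : ¬ (w - z₀ = 0) := sub_ne_zero.mpr hwz
        tauto
    have hord₁ : ∀ z ∈ Z₁, ∃ h : ℂ → ℂ, AnalyticAt ℂ h z ∧ h z ≠ 0 ∧
        ∀ᶠ w in 𝓝 z, g₁ w = (w - z) ^ ord₁ z * h w := by
      intro z hzZ₁
      by_cases hzz : z = z₀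
      · subst hzz
        refine ⟨h₀, hh₀an, hh₀0, ?_⟩
        have : ord₁ z = m₀ - 1 := by simp [hord₁def]
        rw [this]
        exact hg₁loc
      · have hzZ : z ∈ Z := by
          by_cases h1 : m₀ = 1
          · rw [hZ₁def, if_pos h1] at hzZ₁; exact Finset.mem_of_mem_erase hzZ₁
          · rwa [hZ₁def, if_neg h1] at hzZ₁
        obtain ⟨h, hhan, hh0, hev⟩ := hord z hzZ
        refine ⟨fun w => h w / (w - z₀), hhan.div (analyticAt_id.sub analyticAt_const)
          (sub_ne_zero.mpr hzz), div_ne_zero hh0 (sub_ne_zero.mpr hzz), ?_⟩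
        have hupd : ord₁ z = ord z := by simp [hord₁def, Function.update_of_ne hzz]
        rw [hupd]
        filter_upwards [hev, eventually_ne_nhds hzz] with w hw hwne
        simp only [hg₁def, if_neg hwne]
        rw [hw, mul_div_assoc]
    have hsum₁ : ∑ z ∈ Z₁, ord₁ z = n := by
      have herase : ∑ z ∈ Z.erase z₀, ord z + ord z₀ = n + 1 := by
        rw [Finset.sum_erase_add _ _ hz₀]; exact hsum
      have herase' : ∑ z ∈ Z.erase z₀, ord₁ z = ∑ z ∈ Z.erase z₀, ord z :=
        Finset.sum_congr rfl fun z hz =>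
          by simp [hord₁def, Function.update_of_ne (Finset.ne_of_mem_erase hz)]
      by_cases h1 : m₀ = 1
      · rw [hZ₁def, if_pos h1, herase']
        omega
      · rw [hZ₁def, if_neg h1]
        have : ∑ z ∈ Z, ord₁ z = ∑ z ∈ Z.erase z₀, ord₁ z + ord₁ z₀ :=
          (Finset.sum_erase_add _ _ hz₀).symm
        rw [this, herase']
        have : ord₁ z₀ = m₀ - 1 := by simp [hord₁def]
        omega
    have hIH := ih g₁ hg₁ hg₁s Z₁ ord₁ hZ₁ hord₁ hsum₁
    -- the integrand identity on the sphere
    have hderiv : ∀ w ∈ sphere c R, deriv g w / g w = (w - z₀)⁻¹ + deriv g₁ w / g₁ w := by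
      intro w hws
      have hwW : w ∈ W := hB (sphere_subset_closedBall hws)
      have hwz : w ≠ z₀ := fun h => hz₀sph (h ▸ hws)
      have hd₁ : DifferentiableAt ℂ g₁ w := (hg₁ w hwW).differentiableAt
      have hgeq : g = fun w => (w - z₀) * g₁ w := funext hkey
      have hdg : deriv g w = g₁ w + (w - z₀) * deriv g₁ w := by
        rw [hgeq]
        rw [deriv_fun_mul (by fun_prop) hd₁]
        simp [deriv_sub_const]
      rw [hdg, hkey w]
      have h1 : w - z₀ ≠ 0 := sub_ne_zero.mpr hwz
      have h2 : g₁ w ≠ 0 := hg₁s w hws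
      field_simp
    have hint1 : CircleIntegrable (fun z => (z - z₀)⁻¹) c R := by
      refine ContinuousOn.circleIntegrable hR.le ?_
      exact ContinuousOn.inv₀ (by fun_prop) fun w hws => sub_ne_zero.mpr
        (fun h => hz₀sph (h ▸ hws))
    have hint2 : CircleIntegrable (fun z => deriv g₁ z / g₁ z) c R := by
      refine ContinuousOn.circleIntegrable hR.le ?_
      exact ((hg₁.deriv.continuousOn).mono (fun z hz => hB (sphere_subset_closedBall hz))).div
        ((hg₁.continuousOn).mono (fun z hz => hB (sphere_subset_closedBall hz))) hg₁s
    calc (∮ z in C(c, R), deriv g z / g z)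
        = ∮ z in C(c, R), ((z - z₀)⁻¹ + deriv g₁ z / g₁ z) :=
          circleIntegral.integral_congr hR.le (fun w hws => hderiv w hws)
      _ = (∮ z in C(c, R), (z - z₀)⁻¹) + ∮ z in C(c, R), deriv g₁ z / g₁ z :=
          circleIntegral_add' hint1 hint2
      _ = 2 * Real.pi * Complex.I + 2 * Real.pi * Complex.I * n := by
          rw [circleIntegral.integral_sub_inv_of_mem_ball hz₀b, hIH]
      _ = 2 * Real.pi * Complex.I * (n + 1 : ℕ) := by push_cast; ring
open scoped Classical in
noncomputable def aOrd (g : ℂ → ℂ) (z : ℂ) : ℕ :=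
  if h : AnalyticAt ℂ g z then (analyticOrderAt g z).toNat else 0

lemma aOrd_spec {g : ℂ → ℂ} {z : ℂ} (h : AnalyticAt ℂ g z)
    (hne : ¬ (∀ᶠ w in 𝓝 z, g w = 0)) :
    ∃ hfn : ℂ → ℂ, AnalyticAt ℂ hfn z ∧ hfn z ≠ 0 ∧
      ∀ᶠ w in 𝓝 z, g w = (w - z) ^ (aOrd g z) * hfn w := by
  have htop : analyticOrderAt g z ≠ ⊤ := fun ht => hne (analyticOrderAt_eq_top.mp ht)
  have hcoe : analyticOrderAt g z = ((analyticOrderAt g z).toNat : ℕ∞) := (ENat.coe_toNat htop).symm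
  obtain ⟨hfn, han, h0, hev⟩ := (h.analyticOrderAt_eq_natCast).mp hcoe
  refine ⟨hfn, han, h0, ?_⟩
  have he : aOrd g z = (analyticOrderAt g z).toNat := by simp only [aOrd]; rw [dif_pos h]
  rw [he]
  simpa [smul_eq_mul] using hev

/-- Canonical zero data of an analytic function on a disk, nonvanishing on the boundary. -/
lemma disk_data {W : Set ℂ} (hW : IsOpen W) {c : ℂ} {R : ℝ} (hR : 0 < R)
    (hB : closedBall c R ⊆ W) {g : ℂ → ℂ} (hg : AnalyticOnNhd ℂ g W)
    (hgs : ∀ w ∈ sphere c R, g w ≠ 0) :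
    ∃ Z : Finset ℂ, ↑Z = {z ∈ ball c R | g z = 0} ∧
      ∀ z ∈ Z, ∃ h : ℂ → ℂ, AnalyticAt ℂ h z ∧ h z ≠ 0 ∧
        ∀ᶠ w in 𝓝 z, g w = (w - z) ^ (aOrd g z) * h w := by
  have hUW : closure (ball c R) ⊆ W := by rw [closure_ball c hR.ne']; exact hB
  have hfr : ∀ z ∈ frontier (ball c R), g z ≠ 0 := by
    rw [frontier_ball c hR.ne']; exact hgs
  have hfin := zero_set_finite isOpen_ball isBounded_ball hUW hg hfr
  refine ⟨hfin.toFinset, hfin.coe_toFinset, ?_⟩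
  intro z hz
  rw [Set.Finite.mem_toFinset] at hz
  exact aOrd_spec (hg z (hUW (subset_closure hz.1)))
    (not_eventually_zero isOpen_ball isBounded_ball hUW hg hfr hz.1)

/-- **Rouché's theorem**: matching zero counts. -/
lemma rouche {W : Set ℂ} (hW : IsOpen W) {c : ℂ} {R : ℝ} (hR : 0 < R)
    (hB : closedBall c R ⊆ W) {g g₀ : ℂ → ℂ}
    (hg : AnalyticOnNhd ℂ g W) (hg₀ : AnalyticOnNhd ℂ g₀ W)
    (hlt : ∀ w ∈ sphere c R, ‖g w - g₀ w‖ < ‖g₀ w‖)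
    (Z Z₀ : Finset ℂ) (ord ord₀ : ℂ → ℕ)
    (hZ : ↑Z = {z ∈ ball c R | g z = 0}) (hZ₀ : ↑Z₀ = {z ∈ ball c R | g₀ z = 0})
    (hord : ∀ z ∈ Z, ∃ h : ℂ → ℂ, AnalyticAt ℂ h z ∧ h z ≠ 0 ∧
      ∀ᶠ w in 𝓝 z, g w = (w - z) ^ ord z * h w)
    (hord₀ : ∀ z ∈ Z₀, ∃ h : ℂ → ℂ, AnalyticAt ℂ h z ∧ h z ≠ 0 ∧
      ∀ᶠ w in 𝓝 z, g₀ w = (w - z) ^ ord₀ z * h w) :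
    ∑ z ∈ Z, ord z = ∑ z ∈ Z₀, ord₀ z := by
  have hgs : ∀ w ∈ sphere c R, g₀ w ≠ 0 := fun w hw h0 => by
    have h := hlt w hw
    rw [h0, norm_zero, sub_zero] at h
    exact (norm_nonneg _).not_gt h
  have hgs' : ∀ w ∈ sphere c R, g w ≠ 0 := fun w hw h0 => by
    have h := hlt w hw
    rw [h0, zero_sub, norm_neg] at h
    exact lt_irrefl _ h
  set u : ℝ → ℝ := fun s => max 0 (min 1 s) with hu_def
  have hu_cont : Continuous u := continuous_const.max (continuous_const.min continuous_id)
  have hu0 : ∀ s, 0 ≤ u s := fun s => le_max_left _ _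
  have hu1 : ∀ s, u s ≤ 1 := fun s => max_le zero_le_one (min_le_left _ _)
  set G : ℝ → ℂ → ℂ := fun s z => g₀ z + (u s : ℂ) * (g z - g₀ z) with hG_def
  have hGan : ∀ s, AnalyticOnNhd ℂ (G s) W := fun s z hz =>
    (hg₀ z hz).add (analyticAt_const.mul ((hg z hz).sub (hg₀ z hz)))
  have hGs : ∀ s, ∀ w ∈ sphere c R, G s w ≠ 0 := by
    intro s w hw h0
    have h1 : g₀ w = -((u s : ℂ) * (g w - g₀ w)) := by
      rw [hG_def] at h0; linear_combination h0
    have h2 := congrArg norm h1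
    rw [norm_neg, norm_mul, Complex.norm_real, Real.norm_eq_abs,
      _root_.abs_of_nonneg (hu0 s)] at h2
    have h3 : ‖g₀ w‖ ≤ ‖g w - g₀ w‖ := by
      rw [h2]
      exact mul_le_of_le_one_left (norm_nonneg _) (hu1 s)
    exact absurd (hlt w hw) (not_lt.mpr h3)
  -- the parametric integral
  set I : ℝ → ℂ := fun s => ∮ z in C(c, R),
    (deriv g₀ z + (u s : ℂ) * (deriv g z - deriv g₀ z)) / G s z with hI_def
  have hWmem : ∀ θ : ℝ, circleMap c R θ ∈ W := fun θ =>
    hB (sphere_subset_closedBall (circleMap_mem_sphere c hR.le θ))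
  have hIeq : ∀ s, (∮ z in C(c, R), deriv (G s) z / G s z) = I s := by
    intro s
    refine circleIntegral.integral_congr hR.le fun w hw => ?_
    have hwW : w ∈ W := hB (sphere_subset_closedBall hw)
    have hdg : DifferentiableAt ℂ g w := (hg w hwW).differentiableAt
    have hdg₀ : DifferentiableAt ℂ g₀ w := (hg₀ w hwW).differentiableAt
    have : deriv (G s) w = deriv g₀ w + (u s : ℂ) * (deriv g w - deriv g₀ w) := by
      rw [hG_def]
      beta_reduce
      rw [deriv_fun_add hdg₀ ((hdg.fun_sub hdg₀).const_mul _), deriv_const_mul _ (hdg.fun_sub hdg₀),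
        deriv_fun_sub hdg hdg₀]
    rw [this]
  have hIval : ∀ s, ∃ n : ℕ, I s = 2 * Real.pi * Complex.I * n := by
    intro s
    obtain ⟨Zs, hZs, hords⟩ := disk_data hW hR hB (hGan s) (hGs s)
    exact ⟨∑ z ∈ Zs, aOrd (G s) z, by
      rw [← hIeq s]
      exact argument_principle hW hR hB _ (G s) (hGan s) (hGs s) Zs (aOrd (G s)) hZs hords rfl⟩
  -- continuity of the parametric integral
  have hIcont : Continuous I := by
    have : I = fun s => ∫ θ in (0:ℝ)..(2 * Real.pi),
        deriv (circleMap c R) θ •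
          ((deriv g₀ (circleMap c R θ) + (u s : ℂ) *
            (deriv g (circleMap c R θ) - deriv g₀ (circleMap c R θ))) /
            G s (circleMap c R θ)) := rfl
    rw [this]
    apply intervalIntegral.continuous_parametric_intervalIntegral_of_continuous'
      (μ := MeasureTheory.volume)
    have hcm : Continuous fun p : ℝ × ℝ => circleMap c R p.2 :=
      (continuous_circleMap c R).comp continuous_snd
    have hcW : ∀ p : ℝ × ℝ, circleMap c R p.2 ∈ W := fun p => hWmem p.2
    have hcg : Continuous fun p : ℝ × ℝ => g (circleMap c R p.2) :=
      hg.continuousOn.comp_continuous hcm hcW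
    have hcg₀ : Continuous fun p : ℝ × ℝ => g₀ (circleMap c R p.2) :=
      hg₀.continuousOn.comp_continuous hcm hcW
    have hcdg : Continuous fun p : ℝ × ℝ => deriv g (circleMap c R p.2) :=
      hg.deriv.continuousOn.comp_continuous hcm hcW
    have hcdg₀ : Continuous fun p : ℝ × ℝ => deriv g₀ (circleMap c R p.2) :=
      hg₀.deriv.continuousOn.comp_continuous hcm hcW
    have hcu : Continuous fun p : ℝ × ℝ => ((u p.1 : ℝ) : ℂ) :=
      Complex.continuous_ofReal.comp (hu_cont.comp continuous_fst)
    have hcderiv : Continuous fun p : ℝ × ℝ => deriv (circleMap c R) p.2 := by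
      simp only [deriv_circleMap]
      exact ((continuous_circleMap 0 R).comp continuous_snd).mul continuous_const
    have hcden : Continuous fun p : ℝ × ℝ => G p.1 (circleMap c R p.2) :=
      hcg₀.add (hcu.mul (hcg.sub hcg₀))
    have hdenne : ∀ p : ℝ × ℝ, G p.1 (circleMap c R p.2) ≠ 0 := fun p =>
      hGs p.1 _ (circleMap_mem_sphere c hR.le p.2)
    exact hcderiv.smul ((hcdg₀.add (hcu.mul (hcdg.sub hcdg₀))).div hcden hdenne)
  -- `I` is locally constant
  have hILC : IsLocallyConstant I := by
    rw [IsLocallyConstant.iff_exists_open]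
    intro s₀
    suffices hev : ∀ᶠ s in 𝓝 s₀, I s = I s₀ by
      rcases _root_.mem_nhds_iff.mp hev with ⟨t, hsub, hopen, hmem⟩
      exact ⟨t, hopen, hmem, fun s' hs' => hsub hs'⟩
    obtain ⟨n₀, hn₀⟩ := hIval s₀
    have : ∀ᶠ s in 𝓝 s₀, ‖I s - I s₀‖ < 1 := by
      have := Metric.tendsto_nhds.mp (hIcont.tendsto s₀) 1 one_pos
      exact this.mono fun s hs => by rwa [dist_eq_norm] at hs
    refine this.mono fun s hs => ?_
    obtain ⟨n, hn⟩ := hIval s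
    have hcast : I s - I s₀ = 2 * Real.pi * Complex.I * ((n : ℂ) - n₀) := by
      rw [hn, hn₀]; ring
    have hfac : ‖(2 * (Real.pi : ℂ) * Complex.I : ℂ)‖ = 2 * Real.pi := by
      simp [_root_.abs_of_nonneg Real.pi_nonneg]
    have hnorm : ‖I s - I s₀‖ = 2 * Real.pi * ‖(n : ℂ) - (n₀ : ℂ)‖ := by
      rw [hcast, norm_mul, hfac]
    by_cases hnn : n = n₀
    · rw [hn, hn₀, hnn]
    · exfalso
      have h1 : (1 : ℝ) ≤ ‖(n : ℂ) - (n₀ : ℂ)‖ := by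
        have hii : ((n : ℂ) - n₀) = (((n : ℤ) - (n₀ : ℤ) : ℤ) : ℂ) := by push_cast; ring
        rw [hii, Complex.norm_intCast]
        have hne : ((n : ℤ) - n₀) ≠ 0 := sub_ne_zero.mpr (by exact_mod_cast hnn)
        exact_mod_cast Int.one_le_abs hne
      have h2 : (1 : ℝ) ≤ ‖I s - I s₀‖ := by
        rw [hnorm]
        nlinarith [Real.pi_gt_three]
      exact absurd hs (not_lt.mpr h2)
  have hI01 : I 0 = I 1 := hILC.apply_eq_of_preconnectedSpace 0 1
  -- identify the endpoints
  have hu0' : u 0 = 0 := by simp [hu_def]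
  have hu1' : u 1 = 1 := by simp [hu_def]
  have hG0 : G 0 = g₀ := by funext z; simp [hG_def, hu0']
  have hG1 : G 1 = g := by funext z; simp [hG_def, hu1']
  have hI0 : I 0 = 2 * Real.pi * Complex.I * (∑ z ∈ Z₀, ord₀ z : ℕ) := by
    rw [← hIeq 0, hG0]
    exact argument_principle hW hR hB _ g₀ hg₀ hgs Z₀ ord₀ hZ₀ hord₀ rfl
  have hI1 : I 1 = 2 * Real.pi * Complex.I * (∑ z ∈ Z, ord z : ℕ) := by
    rw [← hIeq 1, hG1]
    exact argument_principle hW hR hB _ g hg hgs' Z ord hZ hord rfl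
  have : 2 * Real.pi * Complex.I * (∑ z ∈ Z, ord z : ℕ) =
      2 * Real.pi * Complex.I * (∑ z ∈ Z₀, ord₀ z : ℕ) := by
    rw [← hI1, ← hI0, hI01]
  have hc := mul_left_cancel₀ (by
    simpa using Complex.two_pi_I_ne_zero) this
  exact_mod_cast hc
lemma frontier_nonempty_of_bounded {U : Set ℂ} (hU : IsOpen U)
    (hUb : Bornology.IsBounded U) (hne : U.Nonempty) : (frontier U).Nonempty := by
  by_contra hfe
  rw [Set.not_nonempty_iff_eq_empty] at hfe
  have hclopen : IsClopen U := isClopen_iff_frontier_eq_empty.mpr hfe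
  rcases isClopen_iff.mp hclopen with h | h
  · exact absurd h hne.ne_empty
  · rw [h, Metric.isBounded_iff] at hUb
    obtain ⟨r, hr⟩ := hUb
    have := hr (Set.mem_univ (0 : ℂ)) (Set.mem_univ ((|r| + 1 : ℝ) : ℂ))
    simp only [dist_zero_left] at this
    rw [Complex.norm_real, Real.norm_eq_abs,
      _root_.abs_of_nonneg (by positivity : (0:ℝ) ≤ |r| + 1)] at this
    nlinarith [abs_nonneg r, le_abs_self r]

/-- Homotopy invariance of the number of zeros (counted with multiplicity) of a continuous
one-parameter family of analytic functions with no zeros on the frontier of `U`. -/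
theorem stmt_2 (V : Set ℂ) (hV : IsOpen V) (U : Set ℂ) (hUne : U.Nonempty)
    (hUo : IsOpen U) (hUb : Bornology.IsBounded U) (hUV : closure U ⊆ V)
    (f : ℂ → ℝ → ℂ)
    (hcont : ContinuousOn (fun p : ℂ × ℝ => f p.1 p.2) (V ×ˢ Set.Icc (0 : ℝ) 1))
    (han : ∀ t ∈ Set.Icc (0 : ℝ) 1, AnalyticOnNhd ℂ (fun z => f z t) V)
    (hbd : ∀ z ∈ frontier U, ∀ t ∈ Set.Icc (0 : ℝ) 1, f z t ≠ 0) :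
    (∀ t ∈ Set.Icc (0 : ℝ) 1, {z ∈ U | f z t = 0}.Finite) ∧
    ∃ N : ℕ, ∀ t ∈ Set.Icc (0 : ℝ) 1, ∀ Z : Finset ℂ,
      (↑Z = {z ∈ U | f z t = 0}) →
      ∃ ord : ℂ → ℕ,
        (∀ z ∈ Z, ∃ h : ℂ → ℂ, AnalyticAt ℂ h z ∧ h z ≠ 0 ∧
          ∀ᶠ w in nhds z, f w t = (w - z) ^ ord z * h w) ∧
        ∑ z ∈ Z, ord z = N := by
  classical
  have hfin : ∀ t ∈ Set.Icc (0:ℝ) 1, {z ∈ U | f z t = 0}.Finite := fun t ht =>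
    zero_set_finite hUo hUb hUV (han t ht) (fun z hz => hbd z hz t ht)
  refine ⟨hfin, ?_⟩
  -- clamping function
  set u : ℝ → ℝ := fun s => max 0 (min 1 s) with hu_def
  have hu_cont : Continuous u := continuous_const.max (continuous_const.min continuous_id)
  have hu_mem : ∀ s, u s ∈ Set.Icc (0:ℝ) 1 :=
    fun s => ⟨le_max_left _ _, max_le zero_le_one (min_le_left _ _)⟩
  have hu_id : ∀ t ∈ Set.Icc (0:ℝ) 1, u t = t := by
    intro t ht
    simp only [hu_def]
    rw [min_eq_right ht.2, max_eq_right ht.1]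
  -- canonical finsets and orders
  set F : ℝ → Finset ℂ := fun t =>
    if h : {z ∈ U | f z t = 0}.Finite then h.toFinset else ∅ with hF_def
  have hFcoe : ∀ t ∈ Set.Icc (0:ℝ) 1, ↑(F t) = {z ∈ U | f z t = 0} := by
    intro t ht
    simp only [hF_def, dif_pos (hfin t ht)]
    exact (hfin t ht).coe_toFinset
  set ordF : ℝ → ℂ → ℕ := fun t z => aOrd (fun w => f w t) z with hordF_def
  have hordspec : ∀ t ∈ Set.Icc (0:ℝ) 1, ∀ z ∈ U, f z t = 0 →
      ∃ h : ℂ → ℂ, AnalyticAt ℂ h z ∧ h z ≠ 0 ∧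
        ∀ᶠ w in 𝓝 z, f w t = (w - z) ^ ordF t z * h w := by
    intro t ht z hz _
    exact aOrd_spec (han t ht z (hUV (subset_closure hz)))
      (not_eventually_zero hUo hUb hUV (han t ht) (fun w hw => hbd w hw t ht) hz)
  set Ncount : ℝ → ℕ := fun s => ∑ z ∈ F (u s), ordF (u s) z with hN_def
  -- local constancy of `Ncount`
  have hloc : ∀ s₀ : ℝ, ∀ᶠ s in 𝓝 s₀, Ncount s = Ncount s₀ := by
    intro s₀
    set t₀ := u s₀ with ht₀_def
    have ht₀ : t₀ ∈ Set.Icc (0:ℝ) 1 := hu_mem s₀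
    set g₀ : ℂ → ℂ := fun z => f z t₀ with hg₀_def
    set Z₀ : Finset ℂ := F t₀ with hZ₀_def
    have hZ₀coe : ↑Z₀ = {z ∈ U | g₀ z = 0} := hFcoe t₀ ht₀
    have hZ₀mem : ∀ z ∈ Z₀, z ∈ U ∧ g₀ z = 0 := by
      intro z hz
      have : z ∈ (Z₀ : Set ℂ) := hz
      rw [hZ₀coe] at this; exact this
    -- choose radii
    have hrad : ∀ z ∈ Z₀, ∃ r : ℝ, 0 < r ∧ closedBall z r ⊆ U ∧
        (∀ w ∈ closedBall z r, w ≠ z → g₀ w ≠ 0) ∧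
        (∀ z' ∈ Z₀, z' ≠ z → 2 * r < dist z z') := by
      intro z hz
      obtain ⟨hzU, hgz⟩ := hZ₀mem z hz
      obtain ⟨hfn, hfa, hf0, hev⟩ := hordspec t₀ ht₀ z hzU hgz
      have hevne : ∀ᶠ w in 𝓝 z, hfn w ≠ 0 := hfa.continuousAt.eventually_ne hf0
      have hevU : ∀ᶠ w in 𝓝 z, w ∈ U := hUo.mem_nhds hzU
      have hevgood : ∀ᶠ w in 𝓝 z, (w ≠ z → g₀ w ≠ 0) ∧ w ∈ U := by
        filter_upwards [hev, hevne, hevU] with w h1 h2 h3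
        refine ⟨fun hne h0 => ?_, h3⟩
        have h0' : f w t₀ = 0 := h0
        rw [h1] at h0'
        rcases mul_eq_zero.mp h0' with h | h
        · exact (sub_ne_zero.mpr hne) (pow_eq_zero_iff'.mp h).1
        · exact h2 h
      obtain ⟨ε, hεpos, hε⟩ := Metric.eventually_nhds_iff.mp hevgood
      have hsmall : ∃ d : ℝ, 0 < d ∧ ∀ z' ∈ Z₀, z' ≠ z → d < dist z z' := by
        rcases (Z₀.erase z).eq_empty_or_nonempty with he | hne
        · exact ⟨1, one_pos, fun z' hz' hne' =>
            absurd (Finset.mem_erase.mpr ⟨hne', hz'⟩) (by simp [he])⟩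
        · set d := (Z₀.erase z).inf' hne (fun z' => dist z z') with hd_def
          have hd : 0 < d := by
            rw [hd_def, Finset.lt_inf'_iff]
            intro z' hz'
            exact dist_pos.mpr (fun h => (Finset.mem_erase.mp hz').1 h.symm)
          refine ⟨d / 2, by positivity, fun z' hz' hne' => ?_⟩
          calc d / 2 < d := half_lt_self hd
            _ ≤ dist z z' := Finset.inf'_le _ (Finset.mem_erase.mpr ⟨hne', hz'⟩)
      obtain ⟨d, hdpos, hd⟩ := hsmall
      refine ⟨min (ε / 2) (d / 2), by positivity, ?_, ?_, ?_⟩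
      · intro w hw
        have : dist w z < ε := lt_of_le_of_lt (mem_closedBall.mp hw)
          (lt_of_le_of_lt (min_le_left _ _) (by linarith))
        exact (hε this).2
      · intro w hw hne
        have : dist w z < ε := lt_of_le_of_lt (mem_closedBall.mp hw)
          (lt_of_le_of_lt (min_le_left _ _) (by linarith))
        exact (hε this).1 hne
      · intro z' hz' hne'
        calc 2 * min (ε / 2) (d / 2) ≤ 2 * (d / 2) := by
              have := min_le_right (ε / 2) (d / 2); linarith
          _ = d := by ring
          _ < dist z z' := hd z' hz' hne'
    choose! r hrpos hrU hriso hrsep using hrad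
    -- the compact set away from the zeros
    set K : Set ℂ := closure U \ ⋃ z ∈ Z₀, ball z (r z) with hK_def
    have hKcomp : IsCompact K :=
      hUb.isCompact_closure.diff (isOpen_biUnion fun z _ => isOpen_ball)
    have hfrK : frontier U ⊆ K := by
      intro w hw
      refine ⟨frontier_subset_closure hw, ?_⟩
      intro hmem
      rw [Set.mem_iUnion₂] at hmem
      obtain ⟨z, hz, hwz⟩ := hmem
      have : w ∈ U := hrU z hz (ball_subset_closedBall hwz)
      rw [hUo.frontier_eq] at hw
      exact hw.2 this
    have hKne : K.Nonempty :=
      (frontier_nonempty_of_bounded hUo hUb hUne).mono hfrK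
    have hKV : K ⊆ V := fun w hw => hUV hw.1
    have hg₀K : ∀ w ∈ K, g₀ w ≠ 0 := by
      intro w hw h0
      rcases (mem_closure_iff_nhds.mp hw.1) with _
      by_cases hwU : w ∈ U
      · have : w ∈ (Z₀ : Set ℂ) := by rw [hZ₀coe]; exact ⟨hwU, h0⟩
        have hwZ : w ∈ Z₀ := this
        exact hw.2 (Set.mem_biUnion hwZ (mem_ball_self (hrpos w hwZ)))
      · exact hbd w (by rw [hUo.frontier_eq]; exact ⟨hw.1, hwU⟩) t₀ ht₀ h0
    -- minimum of ‖g₀‖ on K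
    obtain ⟨w₀, hw₀K, hw₀min⟩ := hKcomp.exists_isMinOn hKne
      (continuous_norm.comp_continuousOn (((han t₀ ht₀).continuousOn).mono hKV))
    set ε := ‖g₀ w₀‖ with hε_def
    have hεpos : 0 < ε := by
      rw [hε_def]; exact norm_pos_iff.mpr (hg₀K w₀ hw₀K)
    have hεle : ∀ w ∈ K, ε ≤ ‖g₀ w‖ := fun w hw => hw₀min hw
    -- uniform continuity in the parameter
    have hScomp : IsCompact (closure U ×ˢ Set.Icc (0:ℝ) 1) :=
      hUb.isCompact_closure.prod isCompact_Icc
    have hcS : ContinuousOn (fun p : ℂ × ℝ => f p.1 p.2) (closure U ×ˢ Set.Icc (0:ℝ) 1) :=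
      hcont.mono (Set.prod_mono hUV subset_rfl)
    have hUC := hScomp.uniformContinuousOn_of_continuous hcS
    rw [Metric.uniformContinuousOn_iff] at hUC
    obtain ⟨δ, hδpos, hδ⟩ := hUC ε hεpos
    -- the key claim
    have hkey : ∀ s : ℝ, dist (u s) t₀ < δ → Ncount s = Ncount s₀ := by
      intro s hs
      set t := u s with ht_def
      have ht : t ∈ Set.Icc (0:ℝ) 1 := hu_mem s
      have hclose : ∀ z ∈ closure U, ‖f z t - f z t₀‖ < ε := by
        intro z hz
        have := hδ (z, t) (Set.mk_mem_prod hz ht) (z, t₀) (Set.mk_mem_prod hz ht₀) (by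
          rw [Prod.dist_eq]
          simp only [dist_self]
          rw [max_eq_right dist_nonneg]
          exact hs)
        rwa [dist_eq_norm] at this
      set Fb : ℂ → Finset ℂ := fun z₀ => (F t).filter (fun w => w ∈ ball z₀ (r z₀)) with hFb_def
      -- zeros of `f · t` lie in the balls
      have hcover : ∀ w ∈ U, f w t = 0 → ∃ z ∈ Z₀, w ∈ ball z (r z) := by
        intro w hwU hw0
        by_contra hnone
        push_neg at hnone
        have hwK : w ∈ K := ⟨subset_closure hwU, by
          intro hmem
          rw [Set.mem_iUnion₂] at hmem
          obtain ⟨z, hz, hwz⟩ := hmem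
          exact absurd hwz (hnone z hz)⟩
        have h1 := hclose w (subset_closure hwU)
        rw [hw0, zero_sub, norm_neg] at h1
        exact absurd h1 (not_lt.mpr (hεle w hwK))
      -- per-ball Rouché
      have hball : ∀ z₀ ∈ Z₀, ∑ z ∈ Fb z₀, ordF t z = ordF t₀ z₀ := by
        intro z₀ hz₀
        have hz₀U : z₀ ∈ U := (hZ₀mem z₀ hz₀).1
        have hRpos := hrpos z₀ hz₀
        have hBV : closedBall z₀ (r z₀) ⊆ V :=
          fun w hw => hUV (subset_closure (hrU z₀ hz₀ hw))
        have hsphK : ∀ w ∈ sphere z₀ (r z₀), w ∈ K := by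
          intro w hw
          refine ⟨subset_closure (hrU z₀ hz₀ (sphere_subset_closedBall hw)), ?_⟩
          intro hmem
          rw [Set.mem_iUnion₂] at hmem
          obtain ⟨z, hz, hwz⟩ := hmem
          have h3 : dist w z₀ = r z₀ := mem_sphere.mp hw
          by_cases hzz : z = z₀
          · subst hzz
            rw [mem_ball] at hwz
            exact absurd hwz (by rw [h3]; exact lt_irrefl _)
          · have h1 : dist z z₀ ≤ dist z w + dist w z₀ := dist_triangle _ _ _
            have h2 : dist z w < r z := by rw [dist_comm]; exact mem_ball.mp hwz
            have h4 := hrsep z hz z₀ hz₀ (Ne.symm hzz)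
            have h5 := hrsep z₀ hz₀ z hz hzz
            have h6 : dist z₀ z = dist z z₀ := dist_comm _ _
            linarith
        have hlt : ∀ w ∈ sphere z₀ (r z₀), ‖f w t - g₀ w‖ < ‖g₀ w‖ := by
          intro w hw
          have hwK := hsphK w hw
          exact lt_of_lt_of_le (hclose w hwK.1) (hεle w hwK)
        set Zt : Finset ℂ := Fb z₀ with hZt_def
        have hZt : ↑Zt = {z ∈ ball z₀ (r z₀) | f z t = 0} := by
          ext w
          simp only [hZt_def, hFb_def, Finset.coe_filter, Set.mem_setOf_eq]
          constructor
          · rintro ⟨hwF, hwb⟩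
            have hw' : w ∈ (F t : Set ℂ) := hwF
            rw [hFcoe t ht] at hw'
            exact ⟨hwb, hw'.2⟩
          · rintro ⟨hwb, hw0⟩
            have hwU : w ∈ U := hrU z₀ hz₀ (ball_subset_closedBall hwb)
            have hw' : w ∈ (F t : Set ℂ) := by rw [hFcoe t ht]; exact ⟨hwU, hw0⟩
            exact ⟨hw', hwb⟩
        have hZ₀b : ↑({z₀} : Finset ℂ) = {z ∈ ball z₀ (r z₀) | g₀ z = 0} := by
          ext w
          simp only [Finset.coe_singleton, Set.mem_singleton_iff, Set.mem_setOf_eq]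
          constructor
          · rintro rfl
            exact ⟨mem_ball_self hRpos, (hZ₀mem _ hz₀).2⟩
          · rintro ⟨hwb, hw0⟩
            by_contra hne
            exact hriso z₀ hz₀ w (ball_subset_closedBall hwb) hne hw0
        have hordt : ∀ z ∈ Zt, ∃ h : ℂ → ℂ, AnalyticAt ℂ h z ∧ h z ≠ 0 ∧
            ∀ᶠ w in 𝓝 z, f w t = (w - z) ^ ordF t z * h w := by
          intro z hz
          have hz' : z ∈ (Zt : Set ℂ) := hz
          rw [hZt] at hz'
          exact hordspec t ht z (hrU z₀ hz₀ (ball_subset_closedBall hz'.1)) hz'.2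
        have hord₀b : ∀ z ∈ ({z₀} : Finset ℂ), ∃ h : ℂ → ℂ, AnalyticAt ℂ h z ∧ h z ≠ 0 ∧
            ∀ᶠ w in 𝓝 z, g₀ w = (w - z) ^ ordF t₀ z * h w := by
          intro z hz
          have hz' : z = z₀ := Finset.mem_singleton.mp hz
          rw [hz']
          exact hordspec t₀ ht₀ z₀ hz₀U (hZ₀mem z₀ hz₀).2
        have := rouche hV hRpos hBV (han t ht) (han t₀ ht₀) hlt Zt {z₀} (ordF t) (ordF t₀)
          hZt hZ₀b hordt hord₀b
        rw [Finset.sum_singleton] at this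
        exact this
      -- partition of the zero set of `f · t` into the balls
      have hpart : F t = Z₀.biUnion Fb := by
        ext w
        simp only [Finset.mem_biUnion, hFb_def, Finset.mem_filter]
        constructor
        · intro hw
          have hw' : w ∈ (F t : Set ℂ) := hw
          rw [hFcoe t ht] at hw'
          obtain ⟨z, hz, hwb⟩ := hcover w hw'.1 hw'.2
          exact ⟨z, hz, hw, hwb⟩
        · rintro ⟨z, _, hw, _⟩; exact hw
      have hdisj : (Z₀ : Set ℂ).PairwiseDisjoint Fb := by
        intro a ha b hb hab
        have haZ : a ∈ Z₀ := ha
        have hbZ : b ∈ Z₀ := hb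
        simp only [Function.onFun]
        rw [Finset.disjoint_left]
        intro w hwa hwb
        rw [hFb_def] at hwa hwb
        have h1 : dist a w < r a := by
          rw [dist_comm]; exact mem_ball.mp (Finset.mem_filter.mp hwa).2
        have h2 : dist w b < r b := mem_ball.mp (Finset.mem_filter.mp hwb).2
        have h3 : dist a b ≤ dist a w + dist w b := dist_triangle _ _ _
        have h4 := hrsep a haZ b hbZ (Ne.symm hab)
        have h5 := hrsep b hbZ a haZ hab
        have h6 : dist b a = dist a b := dist_comm _ _
        linarith
      calc Ncount s = ∑ z ∈ F t, ordF t z := rfl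
        _ = ∑ z ∈ Z₀.biUnion Fb, ordF t z := by rw [← hpart]
        _ = ∑ z₀ ∈ Z₀, ∑ z ∈ Fb z₀, ordF t z := Finset.sum_biUnion hdisj
        _ = ∑ z₀ ∈ Z₀, ordF t₀ z₀ := Finset.sum_congr rfl hball
        _ = Ncount s₀ := rfl
    have hev := (hu_cont.tendsto s₀).eventually (Metric.ball_mem_nhds (u s₀) hδpos)
    filter_upwards [hev] with s hs
    exact hkey s (mem_ball.mp hs)
  -- conclude by connectedness
  have hLC : IsLocallyConstant Ncount := by
    rw [IsLocallyConstant.iff_exists_open]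
    intro s₀
    rcases _root_.mem_nhds_iff.mp (hloc s₀) with ⟨t, hsub, hopen, hmem⟩
    exact ⟨t, hopen, hmem, fun s' hs' => hsub hs'⟩
  refine ⟨Ncount 0, ?_⟩
  intro t ht Z hZcoe
  have hZF : Z = F t := Finset.coe_injective (by rw [hZcoe, hFcoe t ht])
  refine ⟨ordF t, ?_, ?_⟩
  · intro z hz
    have hz' : z ∈ (Z : Set ℂ) := hz
    rw [hZcoe] at hz'
    exact hordspec t ht z hz'.1 hz'.2
  · have h1 : Ncount t = Ncount 0 := hLC.apply_eq_of_preconnectedSpace t 0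
    have h2 : Ncount t = ∑ z ∈ F t, ordF t z := by
      simp only [hN_def, hu_id t ht]
    rw [hZF, ← h2, h1]
end

section
/- Let n ≥ 1, let a₀, a₁ be n×n complex matrices, let λ ∈ ℂ, and let A₁(λ) be the 2n×2n complex block matrix with blocks A₁(λ) = [[0, I_n], [λ·I_n − a₀, −a₁]]. Then the linear system X' = A₁(λ)X admits an exponential dichotomy — i.e. there exist a 2n×2n matrix P with P·P = P and P·A₁(λ) = A₁(λ)·P, and constants K ≥ 1, α > 0, such that ‖exp(t•A₁(λ))·P‖ ≤ K·exp(−α·t) for all t ≥ 0 and ‖exp(t•A₁(λ))·(1 − P)‖ ≤ K·exp(α·t) for all t ≤ 0 — if and only if for every μ ∈ ℝ one has det(λ·I_n − (a₀ − μ²·I_n + i·μ·a₁)) ≠ 0. -/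
open scoped Matrix
open Polynomial Filter
open scoped Nat

attribute [local instance] Matrix.linftyOpNormedAddCommGroup

set_option linter.unusedSectionVars false
set_option maxHeartbeats 1000000

namespace Dicho

attribute [local instance] Matrix.linftyOpNormedRing Matrix.linftyOpNormedAlgebra

variable {N : Type*} [Fintype N] [DecidableEq N]

lemma real_smul_matrix (t : ℝ) (M : Matrix N N ℂ) : t • M = (t : ℂ) • M := by
  ext i j
  simp [Matrix.smul_apply, Complex.real_smul]

lemma eval_charpoly (M : Matrix N N ℂ) (z : ℂ) :
    M.charpoly.eval z = (z • (1 : Matrix N N ℂ) - M).det := by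
  rw [Matrix.charpoly, ← Polynomial.coe_evalRingHom, RingHom.map_det]
  congr 1
  ext i j
  by_cases h : i = j <;>
    simp [h, Matrix.charmatrix_apply, Matrix.one_apply, Matrix.smul_apply, Matrix.sub_apply,
      Matrix.diagonal]

lemma det_eq_zero_iff_eigen (M : Matrix N N ℂ) (z : ℂ) :
    (z • (1 : Matrix N N ℂ) - M).det = 0 ↔ ∃ w, w ≠ 0 ∧ M *ᵥ w = z • w := by
  rw [← Matrix.exists_mulVec_eq_zero_iff]
  constructor
  · rintro ⟨v, hv, h⟩
    refine ⟨v, hv, ?_⟩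
    rw [Matrix.sub_mulVec, Matrix.smul_mulVec, Matrix.one_mulVec, sub_eq_zero] at h
    exact h.symm
  · rintro ⟨v, hv, h⟩
    refine ⟨v, hv, ?_⟩
    rw [Matrix.sub_mulVec, Matrix.smul_mulVec, Matrix.one_mulVec, sub_eq_zero, h]

lemma pow_div_factorial_le_exp (x : ℝ) (hx : 0 ≤ x) (k : ℕ) :
    x ^ k / (k ! : ℝ) ≤ Real.exp x := by
  calc x ^ k / (k ! : ℝ) ≤ ∑ i ∈ Finset.range (k + 1), x ^ i / i !   := by
        refine Finset.single_le_sum (f := fun i => x ^ i / (i ! : ℝ)) (fun i _ => by positivity)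
          (Finset.self_mem_range_succ k)
    _ ≤ Real.exp x := Real.sum_le_exp_of_nonneg hx _

lemma exp_mul_bound (A Q : Matrix N N ℂ) (μ : ℂ) (m : ℕ) (β : ℝ) (hβ : 0 < β)
    (hre : μ.re ≤ -β) (hnil : (A - μ • 1) ^ m * Q = 0) :
    ∃ C : ℝ, 0 ≤ C ∧ ∀ t : ℝ, 0 ≤ t →
      ‖NormedSpace.exp (t • A) * Q‖ ≤ C * Real.exp (-(β / 2) * t) := by
  set B : Matrix N N ℂ := A - μ • 1 with hB
  refine ⟨∑ k ∈ Finset.range m, (2 / β) ^ k * ‖B ^ k * Q‖, by positivity, fun t ht => ?_⟩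
  have hsplit : NormedSpace.exp (t • A)
      = Complex.exp ((t : ℂ) * μ) • NormedSpace.exp ((t : ℂ) • B) := by
    have h1 : t • A = ((t : ℂ) * μ) • (1 : Matrix N N ℂ) + (t : ℂ) • B := by
      rw [real_smul_matrix, hB, smul_sub, smul_smul]
      abel
    rw [h1, Matrix.exp_add_of_commute _ _ (((Commute.one_left _).smul_left _))]
    have h2 : NormedSpace.exp (((t : ℂ) * μ) • (1 : Matrix N N ℂ))
        = Complex.exp ((t : ℂ) * μ) • (1 : Matrix N N ℂ) := by
      erw [← Algebra.algebraMap_eq_smul_one, ← NormedSpace.algebraMap_exp_comm,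
        Algebra.algebraMap_eq_smul_one, Complex.exp_eq_exp_ℂ]
    rw [h2, smul_mul_assoc, one_mul]
  have hexpB : NormedSpace.exp ((t : ℂ) • B) * Q
      = ∑ k ∈ Finset.range m, ((t : ℂ) ^ k * ((k ! : ℂ))⁻¹) • (B ^ k * Q) := by
    rw [NormedSpace.exp_eq_tsum ℂ]
    beta_reduce
    erw [← (NormedSpace.expSeries_summable' (𝕂 := ℂ) ((t : ℂ) • B)).tsum_mul_right Q]
    rw [tsum_eq_sum (s := Finset.range m) ?_]
    · exact Finset.sum_congr rfl fun k _ => by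
        rw [_root_.smul_pow, smul_mul_assoc, smul_mul_assoc, smul_smul, mul_comm ((k ! : ℂ))⁻¹]
    · intro k hk
      rw [Finset.mem_range, not_lt] at hk
      have : B ^ k * Q = 0 := by
        have : B ^ k = B ^ (k - m) * B ^ m := by rw [← pow_add]; congr 1; omega
        rw [this, mul_assoc, hnil, mul_zero]
      rw [_root_.smul_pow, smul_mul_assoc, smul_mul_assoc, this, smul_zero, smul_zero]
  rw [hsplit, smul_mul_assoc, hexpB, norm_smul]
  have hnorme : ‖Complex.exp ((t : ℂ) * μ)‖ = Real.exp (t * μ.re) := by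
    rw [Complex.norm_exp]
    congr 1
    simp [Complex.mul_re]
  rw [hnorme]
  calc Real.exp (t * μ.re) * ‖∑ k ∈ Finset.range m, ((t : ℂ) ^ k * ((k ! : ℂ))⁻¹) • (B ^ k * Q)‖
      ≤ Real.exp (t * μ.re) * ∑ k ∈ Finset.range m, t ^ k / k ! * ‖B ^ k * Q‖ := by
        refine mul_le_mul_of_nonneg_left ?_ (Real.exp_nonneg _)
        refine (norm_sum_le _ _).trans (Finset.sum_le_sum fun k _ => ?_)
        rw [norm_smul, norm_mul, norm_pow, norm_inv, Complex.norm_real, Real.norm_eq_abs,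
          abs_of_nonneg ht]
        rw [Complex.norm_natCast]
        rw [div_eq_mul_inv]
    _ = ∑ k ∈ Finset.range m, t ^ k / k ! * Real.exp (t * μ.re) * ‖B ^ k * Q‖ := by
        rw [Finset.mul_sum]; exact Finset.sum_congr rfl fun k _ => by ring
    _ ≤ ∑ k ∈ Finset.range m, (2 / β) ^ k * Real.exp (-(β / 2) * t) * ‖B ^ k * Q‖ := by
        refine Finset.sum_le_sum fun k _ => ?_
        refine mul_le_mul_of_nonneg_right ?_ (norm_nonneg _)
        have h2 : Real.exp (t * μ.re) ≤ Real.exp (-(β * t)) := by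
          refine Real.exp_le_exp.2 ?_
          nlinarith
        have h3 : t ^ k / (k ! : ℝ) ≤ (2 / β) ^ k * Real.exp (β / 2 * t) := by
          have := pow_div_factorial_le_exp (β / 2 * t) (by positivity) k
          have hpow : t ^ k = (2 / β) ^ k * (β / 2 * t) ^ k := by
            rw [mul_pow, ← mul_assoc, ← mul_pow]
            field_simp
            simp
          rw [hpow, mul_div_assoc]
          exact mul_le_mul_of_nonneg_left this (by positivity)
        calc t ^ k / (k ! : ℝ) * Real.exp (t * μ.re)
            ≤ (2 / β) ^ k * Real.exp (β / 2 * t) * Real.exp (-(β * t)) := by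
              refine mul_le_mul h3 h2 (Real.exp_nonneg _) (by positivity)
          _ = (2 / β) ^ k * Real.exp (-(β / 2) * t) := by
              rw [mul_assoc, ← Real.exp_add]; congr 2; ring
    _ = (∑ k ∈ Finset.range m, (2 / β) ^ k * ‖B ^ k * Q‖) * Real.exp (-(β / 2) * t) := by
        rw [Finset.sum_mul]; exact Finset.sum_congr rfl fun k _ => by ring

lemma spectral_decomp [Nonempty N] (A : Matrix N N ℂ) :
    ∃ (R : Finset ℂ) (e : ℂ → Matrix N N ℂ) (m : ℂ → ℕ),
      R.Nonempty ∧
      (∀ μ ∈ R, (μ • (1 : Matrix N N ℂ) - A).det = 0) ∧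
      (∑ μ ∈ R, e μ) = 1 ∧
      (∀ μ ∈ R, A * e μ = e μ * A) ∧
      (∀ μ ∈ R, ∀ ν ∈ R, μ ≠ ν → e μ * e ν = 0) ∧
      (∀ μ ∈ R, (A - μ • 1) ^ m μ * e μ = 0) := by
  classical
  set p := A.charpoly with hp
  have hmonic : p.Monic := A.charpoly_monic
  have hpne : p ≠ 0 := hmonic.ne_zero
  have hsplit : p = (p.roots.map fun a => X - C a).prod :=
    (IsAlgClosed.splits p).eq_prod_roots_of_monic hmonic
  set R := p.roots.toFinset with hR
  set m : ℂ → ℕ := fun μ => p.roots.count μ with hm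
  set f : ℂ → ℂ[X] := fun μ => (X - C μ) ^ m μ with hf
  have hprod : p = ∏ μ ∈ R, f μ := by
    rw [hsplit, Finset.prod_multiset_map_count]
  have hcp : ∀ μ ν : ℂ, μ ≠ ν → IsCoprime (f μ) (f ν) := by
    intro μ ν hne
    exact (isCoprime_X_sub_C_of_isUnit_sub ((sub_ne_zero.mpr hne).isUnit)).pow
  set q : ℂ → ℂ[X] := fun μ => ∏ ν ∈ R.erase μ, f ν with hq
  have key : ∀ μ : ℂ, ∃ g : ℂ[X], μ ∈ R → (f μ ∣ (1 - g)) ∧ q μ ∣ g := by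
    intro μ
    by_cases hμ : μ ∈ R
    · have hcop : IsCoprime (f μ) (q μ) := by
        refine IsCoprime.prod_right fun ν hν => hcp _ _ ?_
        exact fun h => (Finset.mem_erase.1 hν).1 h.symm
      obtain ⟨u, v, huv⟩ := hcop
      refine ⟨v * q μ, fun _ => ⟨⟨u, ?_⟩, dvd_mul_left _ _⟩⟩
      rw [← huv]; ring
    · exact ⟨0, fun h => absurd h hμ⟩
  choose g hg using key
  have hfdvdq : ∀ μ ∈ R, ∀ ν ∈ R, μ ≠ ν → f μ ∣ g ν := by
    intro μ hμ ν hν hne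
    exact dvd_trans (Finset.dvd_prod_of_mem f (Finset.mem_erase.2 ⟨hne, hμ⟩)) ((hg ν hν).2)
  have hdvd_orth : ∀ μ ∈ R, ∀ ν ∈ R, μ ≠ ν → p ∣ g μ * g ν := by
    intro μ hμ ν hν hne
    have h1 : q μ ∣ g μ := (hg μ hμ).2
    have h2 : f μ ∣ g ν := hfdvdq μ hμ ν hν hne
    have : f μ * q μ ∣ g ν * g μ := mul_dvd_mul h2 h1
    rw [mul_comm (g ν)] at this
    rwa [hprod, ← Finset.mul_prod_erase _ _ hμ]
  have hdvd_sum : p ∣ 1 - ∑ μ ∈ R, g μ := by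
    rw [hprod]
    refine Finset.prod_dvd_of_coprime ?_ ?_
    · intro μ hμ ν hν hne
      exact hcp μ ν hne
    · intro μ hμ
      have h1 : 1 - ∑ ν ∈ R, g ν = (1 - g μ) - ∑ ν ∈ R.erase μ, g ν := by
        rw [← Finset.add_sum_erase _ _ hμ]; ring
      rw [h1]
      refine dvd_sub ((hg μ hμ).1) (Finset.dvd_sum fun ν hν => ?_)
      exact hfdvdq μ hμ ν (Finset.mem_of_mem_erase hν) fun h =>
        (Finset.mem_erase.1 hν).1 h.symm
  have hdvd_nil : ∀ μ ∈ R, p ∣ f μ * g μ := by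
    intro μ hμ
    rw [hprod, ← Finset.mul_prod_erase _ _ hμ]
    exact mul_dvd_mul_left _ ((hg μ hμ).2)
  have haeval0 : ∀ r : ℂ[X], p ∣ r → aeval A r = 0 := by
    intro r ⟨c, hc⟩
    rw [hc, map_mul, hp, Matrix.aeval_self_charpoly, zero_mul]
  have haevalf : ∀ μ : ℂ, aeval A (f μ) = (A - μ • 1) ^ m μ := by
    intro μ
    rw [hf]
    simp only [map_pow, map_sub, aeval_X, aeval_C]
    rw [Algebra.algebraMap_eq_smul_one]
  have hRne : R.Nonempty := by
    have hdeg : 0 < p.degree := by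
      have h1 : p.natDegree = Fintype.card N := A.charpoly_natDegree_eq_dim
      have h2 : 0 < p.natDegree := h1 ▸ Fintype.card_pos
      exact natDegree_pos_iff_degree_pos.1 h2
    obtain ⟨z, hz⟩ := Complex.exists_root hdeg
    exact ⟨z, Multiset.mem_toFinset.2 ((mem_roots hpne).2 hz)⟩
  refine ⟨R, fun μ => aeval A (g μ), m, hRne, ?_, ?_, ?_, ?_, ?_⟩
  · intro μ hμ
    rw [← eval_charpoly]
    exact ((mem_roots hpne).1 (Multiset.mem_toFinset.1 hμ))
  · have := haeval0 _ hdvd_sum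
    rw [map_sub] at this
    rw [map_one] at this
    rw [map_sum (aeval (R := ℂ) A) g R] at this
    rw [sub_eq_zero] at this
    exact this.symm
  · intro μ hμ
    calc A * aeval A (g μ) = aeval A ((X : ℂ[X]) * g μ) := by rw [map_mul, aeval_X]
      _ = aeval A (g μ * (X : ℂ[X])) := by rw [mul_comm]
      _ = aeval A (g μ) * A := by rw [map_mul, aeval_X]
  · intro μ hμ ν hν hne
    rw [← map_mul]
    exact haeval0 _ (hdvd_orth μ hμ ν hν hne)
  · intro μ hμ
    rw [← haevalf, ← map_mul]
    exact haeval0 _ (hdvd_nil μ hμ)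

lemma exp_mul_eigen (A W : Matrix N N ℂ) (z : ℂ) (hAW : A * W = z • W) (t : ℝ) :
    NormedSpace.exp (t • A) * W = Complex.exp ((t : ℂ) * z) • W := by
  have hpow : ∀ k : ℕ, A ^ k * W = z ^ k • W := by
    intro k
    induction k with
    | zero => simp
    | succ k ih =>
      rw [pow_succ, pow_succ, mul_assoc, hAW, Matrix.mul_smul, ih, smul_smul, mul_comm]
  rw [real_smul_matrix, NormedSpace.exp_eq_tsum ℂ]
  beta_reduce
  erw [← (NormedSpace.expSeries_summable' (𝕂 := ℂ) ((t : ℂ) • A)).tsum_mul_right W]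
  have hterm : ∀ k : ℕ, ((k ! : ℂ)⁻¹ • ((t : ℂ) • A) ^ k) * W
      = ((k ! : ℂ)⁻¹ * ((t : ℂ) * z) ^ k) • W := by
    intro k
    rw [_root_.smul_pow, smul_mul_assoc, smul_mul_assoc, hpow, smul_smul, smul_smul, mul_pow,
      mul_assoc]
  calc (∑' k : ℕ, ((k ! : ℂ)⁻¹ • ((t : ℂ) • A) ^ k) * W)
      = ∑' k : ℕ, ((k ! : ℂ)⁻¹ * ((t : ℂ) * z) ^ k) • W := by
        exact tsum_congr hterm
    _ = (∑' k : ℕ, (k ! : ℂ)⁻¹ * ((t : ℂ) * z) ^ k) • W := by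
        refine Summable.tsum_smul_const ?_ W
        simpa [smul_eq_mul] using NormedSpace.expSeries_summable' (𝕂 := ℂ) ((t : ℂ) * z)
    _ = Complex.exp ((t : ℂ) * z) • W := by
        congr 1
        rw [Complex.exp_eq_exp_ℂ, NormedSpace.exp_eq_tsum ℂ]
        simp [smul_eq_mul]

lemma proj_mul_eq_zero (A P W : Matrix N N ℂ) (K α : ℝ) (hα : 0 < α)
    (hcomm : P * A = A * P) (z : ℂ) (hz : z.re = 0) (hAW : A * W = z • W)
    (hbound : ∀ t : ℝ, 0 ≤ t → ‖NormedSpace.exp (t • A) * P‖ ≤ K * Real.exp (-α * t)) :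
    P * W = 0 := by
  have hnorm : ∀ t : ℝ, 0 ≤ t → ‖P * W‖ ≤ K * ‖W‖ * Real.exp (-α * t) := by
    intro t ht
    have hcommute : NormedSpace.exp (t • A) * P = P * NormedSpace.exp (t • A) := by
      have h1 : Commute (t • A) P := (Commute.smul_left hcomm.symm t)
      exact h1.exp_left.eq
    have h2 : NormedSpace.exp (t • A) * P * W = Complex.exp ((t : ℂ) * z) • (P * W) := by
      rw [hcommute, mul_assoc, exp_mul_eigen A W z hAW, Matrix.mul_smul]
    have h3 : ‖Complex.exp ((t : ℂ) * z)‖ = 1 := by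
      rw [Complex.norm_exp]
      have : ((t : ℂ) * z).re = 0 := by simp [Complex.mul_re, hz]
      rw [this, Real.exp_zero]
    calc ‖P * W‖ = ‖Complex.exp ((t : ℂ) * z) • (P * W)‖ := by rw [norm_smul, h3, one_mul]
      _ = ‖NormedSpace.exp (t • A) * P * W‖ := by rw [h2]
      _ ≤ ‖NormedSpace.exp (t • A) * P‖ * ‖W‖ := norm_mul_le _ _
      _ ≤ K * Real.exp (-α * t) * ‖W‖ := by
          exact mul_le_mul_of_nonneg_right (hbound t ht) (norm_nonneg _)
      _ = K * ‖W‖ * Real.exp (-α * t) := by ring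
  have htend : Tendsto (fun t : ℝ => K * ‖W‖ * Real.exp (-α * t)) atTop (nhds 0) := by
    have h1 : Tendsto (fun t : ℝ => α * t) atTop atTop :=
      Tendsto.const_mul_atTop hα tendsto_id
    have h2 : Tendsto (fun t : ℝ => Real.exp (-(α * t))) atTop (nhds 0) :=
      Real.tendsto_exp_neg_atTop_nhds_zero.comp h1
    have h3 := h2.const_mul (K * ‖W‖)
    rw [mul_zero] at h3
    refine h3.congr fun t => by rw [neg_mul]
  have hle : ‖P * W‖ ≤ 0 := by
    refine ge_of_tendsto htend ?_
    filter_upwards [eventually_ge_atTop (0 : ℝ)] with t ht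
    exact hnorm t ht
  have := le_antisymm hle (norm_nonneg _)
  rwa [norm_eq_zero] at this


lemma eig_corr {n : ℕ} (a₀ a₁ : Matrix (Fin n) (Fin n) ℂ) (l : ℂ) (μ : ℝ)
    (A : Matrix (Fin n ⊕ Fin n) (Fin n ⊕ Fin n) ℂ)
    (hA : A = Matrix.fromBlocks 0 1 (l • 1 - a₀) (-a₁)) :
    (∃ w, w ≠ 0 ∧ A *ᵥ w = (Complex.I * (μ : ℂ)) • w) ↔
    (∃ v, v ≠ 0 ∧ (l • (1 : Matrix (Fin n) (Fin n) ℂ)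
        - (a₀ - ((μ : ℂ) ^ 2) • 1 + (Complex.I * (μ : ℂ)) • a₁)) *ᵥ v = 0) := by
  set z : ℂ := Complex.I * (μ : ℂ) with hz
  have hz2 : z ^ 2 = -((μ : ℂ) ^ 2) := by
    rw [hz, mul_pow, Complex.I_sq]; ring
  set M : Matrix (Fin n) (Fin n) ℂ :=
    l • (1 : Matrix (Fin n) (Fin n) ℂ) - (a₀ - ((μ : ℂ) ^ 2) • 1 + z • a₁) with hM
  have hMv_expand : ∀ v : Fin n → ℂ,
      M *ᵥ v = l • v - a₀ *ᵥ v + ((μ : ℂ) ^ 2) • v - z • (a₁ *ᵥ v) := by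
    intro v
    rw [hM, Matrix.sub_mulVec, Matrix.add_mulVec, Matrix.sub_mulVec, Matrix.smul_mulVec,
      Matrix.smul_mulVec, Matrix.smul_mulVec, Matrix.one_mulVec]
    abel
  constructor
  · rintro ⟨w, hw, hAw⟩
    set v : Fin n → ℂ := w ∘ Sum.inl with hv
    set u : Fin n → ℂ := w ∘ Sum.inr with hu
    rw [hA, Matrix.fromBlocks_mulVec] at hAw
    have hl : (0 : Matrix (Fin n) (Fin n) ℂ) *ᵥ v + (1 : Matrix (Fin n) (Fin n) ℂ) *ᵥ u
        = z • v := by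
      funext i; exact congrFun hAw (Sum.inl i)
    have hr : (l • 1 - a₀) *ᵥ v + (-a₁) *ᵥ u = z • u := by
      funext i; exact congrFun hAw (Sum.inr i)
    rw [Matrix.zero_mulVec, Matrix.one_mulVec, zero_add] at hl
    refine ⟨v, ?_, ?_⟩
    · intro h0
      apply hw
      funext x
      cases x with
      | inl i => exact congrFun h0 i
      | inr i =>
        rw [show w (Sum.inr i) = u i from rfl, hl, h0]
        simp
    · rw [hMv_expand]
      rw [hl, Matrix.sub_mulVec, Matrix.smul_mulVec, Matrix.one_mulVec,
        Matrix.neg_mulVec, Matrix.mulVec_smul] at hr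
      funext i
      have h1 := congrFun hr i
      simp only [Pi.add_apply, Pi.sub_apply, Pi.smul_apply, Pi.neg_apply, Pi.zero_apply,
        smul_eq_mul] at h1 ⊢
      have hzz : z * z = -((μ : ℂ) ^ 2) := by rw [← sq]; exact hz2
      linear_combination h1 + v i * hzz + (a₁ *ᵥ v) i * hz
  · rintro ⟨v, hv, hMv⟩
    have hMv' := hMv
    rw [hMv_expand] at hMv'
    refine ⟨Sum.elim v (z • v), ?_, ?_⟩
    · intro h
      apply hv
      funext i
      exact congrFun h (Sum.inl i)
    · rw [hA, Matrix.fromBlocks_mulVec]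
      have hblock : (l • 1 - a₀) *ᵥ v + (-a₁) *ᵥ (z • v) = z • (z • v) := by
        rw [Matrix.sub_mulVec, Matrix.smul_mulVec, Matrix.one_mulVec,
          Matrix.neg_mulVec, Matrix.mulVec_smul, smul_smul, ← sq, hz2]
        funext i
        have h1 := congrFun hMv' i
        simp only [Pi.add_apply, Pi.sub_apply, Pi.smul_apply, Pi.neg_apply, Pi.zero_apply,
          smul_eq_mul] at h1 ⊢
        linear_combination h1
      rw [Sum.elim_comp_inl, Sum.elim_comp_inr, Matrix.zero_mulVec, Matrix.one_mulVec,
        zero_add, hblock]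
      funext x
      cases x <;> rfl

end Dicho

/-- The system `X' = A₁(λ)X`, with `A₁(λ) = [[0, I], [λI - a₀, -a₁]]`, admits an exponential
dichotomy iff `det (λI - (a₀ - μ²I + iμ a₁)) ≠ 0` for all real `μ`. -/
theorem stmt_3 (n : ℕ) (hn : 1 ≤ n) (a₀ a₁ : Matrix (Fin n) (Fin n) ℂ) (l : ℂ)
    (A : Matrix (Fin n ⊕ Fin n) (Fin n ⊕ Fin n) ℂ)
    (hA : A = Matrix.fromBlocks 0 1 (l • 1 - a₀) (-a₁)) :
    (∃ (P : Matrix (Fin n ⊕ Fin n) (Fin n ⊕ Fin n) ℂ) (K α : ℝ),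
      P * P = P ∧ P * A = A * P ∧ 1 ≤ K ∧ 0 < α ∧
      (∀ t : ℝ, 0 ≤ t → ‖NormedSpace.exp (t • A) * P‖ ≤ K * Real.exp (-α * t)) ∧
      (∀ t : ℝ, t ≤ 0 → ‖NormedSpace.exp (t • A) * (1 - P)‖ ≤ K * Real.exp (α * t))) ↔
    (∀ μ : ℝ, (l • (1 : Matrix (Fin n) (Fin n) ℂ)
        - (a₀ - ((μ : ℂ) ^ 2) • 1 + (Complex.I * (μ : ℂ)) • a₁)).det ≠ 0) := by
  classical
  have hNE : Nonempty (Fin n ⊕ Fin n) := ⟨Sum.inl ⟨0, hn⟩⟩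
  constructor
  · rintro ⟨P, K, α, hPP, hPA, hK, hα, hs, hu⟩ μ hdet
    obtain ⟨v, hv, hMv⟩ := Matrix.exists_mulVec_eq_zero_iff.2 hdet
    obtain ⟨w, hw, hAw⟩ := (Dicho.eig_corr a₀ a₁ l μ A hA).2 ⟨v, hv, hMv⟩
    set z : ℂ := Complex.I * (μ : ℂ) with hzdef
    have hzre : z.re = 0 := by simp [hzdef]
    set W : Matrix (Fin n ⊕ Fin n) (Fin n ⊕ Fin n) ℂ := Matrix.of fun i _ => w i with hW
    have hAW : A * W = z • W := by
      ext i j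
      have h := congrFun hAw i
      simpa [Matrix.mul_apply, Matrix.mulVec, dotProduct, Matrix.smul_apply, hW] using h
    have hPW : P * W = 0 := Dicho.proj_mul_eq_zero A P W K α hα hPA z hzre hAW hs
    have hQA : (1 - P) * A = A * (1 - P) := by
      rw [sub_mul, mul_sub, one_mul, mul_one, hPA]
    have hQW : (1 - P) * W = 0 := by
      refine Dicho.proj_mul_eq_zero (-A) (1 - P) W K α hα ?_ (-z) (by simp [hzre]) ?_ ?_
      · rw [mul_neg, neg_mul, hQA]
      · rw [neg_mul, hAW, neg_smul]
      · intro s hs'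
        have h := hu (-s) (neg_nonpos.2 hs')
        have e1 : s • (-A) = (-s) • A := by rw [smul_neg, neg_smul]
        have e2 : α * (-s) = -α * s := by ring
        rw [e1]
        rw [e2] at h
        exact h
    have hW0 : W = 0 := by
      have h1 : P + (1 - P) = 1 := by abel
      have h2 : W = P * W + (1 - P) * W := by rw [← add_mul, h1, one_mul]
      rw [h2, hPW, hQW, add_zero]
    apply hw
    funext i
    have h3 : W i (Classical.arbitrary _) = 0 := by rw [hW0]; rfl
    simpa [hW] using h3
  · intro hdet
    obtain ⟨R, e, m, hRne, hdet0, hsum, hcommA, horth, hnil⟩ := Dicho.spectral_decomp A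
    have hre : ∀ ρ ∈ R, ρ.re ≠ 0 := by
      intro ρ hρ h0
      have hρ' : ρ = Complex.I * (ρ.im : ℂ) := by
        apply Complex.ext <;> simp [h0]
      obtain ⟨w, hw, hAw⟩ := (Dicho.det_eq_zero_iff_eigen A ρ).1 (hdet0 ρ hρ)
      rw [hρ'] at hAw
      obtain ⟨v, hv, hMv⟩ := (Dicho.eig_corr a₀ a₁ l ρ.im A hA).1 ⟨w, hw, hAw⟩
      exact hdet ρ.im (Matrix.exists_mulVec_eq_zero_iff.1 ⟨v, hv, hMv⟩)
    set S := R.image fun ρ : ℂ => |ρ.re| with hS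
    have hSne : S.Nonempty := hRne.image _
    set β := S.min' hSne with hβdef
    have hβpos : 0 < β := by
      obtain ⟨ρ, hρ, hρβ⟩ := Finset.mem_image.1 (S.min'_mem hSne)
      rw [hβdef, ← hρβ]
      exact abs_pos.2 (hre ρ hρ)
    have hβle : ∀ ρ ∈ R, β ≤ |ρ.re| := fun ρ hρ => S.min'_le _ (Finset.mem_image_of_mem _ hρ)
    set F := R.filter (fun ρ : ℂ => ρ.re < 0) with hF
    set Fc := R.filter (fun ρ : ℂ => ¬ ρ.re < 0) with hFc
    set P := ∑ ρ ∈ F, e ρ with hP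
    have hPA : P * A = A * P := by
      rw [hP, Finset.sum_mul, Finset.mul_sum]
      exact Finset.sum_congr rfl fun ρ hρ => (hcommA ρ (Finset.mem_of_mem_filter _ hρ)).symm
    have hmulsum : ∀ ρ ∈ R, ∀ S' : Finset ℂ, S' ⊆ R → ρ ∈ S' →
        e ρ * (∑ ν ∈ S', e ν) = e ρ * e ρ := by
      intro ρ hρ S' hsub hρS
      rw [Finset.mul_sum]
      exact Finset.sum_eq_single_of_mem ρ hρS fun ν hν hne =>
        horth ρ hρ ν (hsub hν) (Ne.symm hne)
    have hPP : P * P = P := by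
      have h1 : ∀ ρ ∈ F, e ρ * P = e ρ * e ρ := fun ρ hρ =>
        hmulsum ρ (Finset.mem_of_mem_filter _ hρ) F (Finset.filter_subset _ _) hρ
      have h2 : ∀ ρ ∈ F, e ρ = e ρ * e ρ := by
        intro ρ hρ
        have := hmulsum ρ (Finset.mem_of_mem_filter _ hρ) R (subset_refl R)
          (Finset.mem_of_mem_filter _ hρ)
        rw [hsum, mul_one] at this
        exact this
      calc P * P = ∑ ρ ∈ F, e ρ * P := by rw [hP, Finset.sum_mul]
        _ = ∑ ρ ∈ F, e ρ * e ρ := Finset.sum_congr rfl h1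
        _ = ∑ ρ ∈ F, e ρ := (Finset.sum_congr rfl h2).symm
        _ = P := hP.symm
    have hQeq : 1 - P = ∑ ρ ∈ Fc, e ρ := by
      have h := Finset.sum_filter_add_sum_filter_not R (fun ρ : ℂ => ρ.re < 0) e
      rw [hsum] at h
      rw [hP, ← h]
      abel
    have hbF : ∀ ρ : ℂ, ∃ C : ℝ, 0 ≤ C ∧ (ρ ∈ F → ∀ t : ℝ, 0 ≤ t →
        ‖NormedSpace.exp (t • A) * e ρ‖ ≤ C * Real.exp (-(β / 2) * t)) := by
      intro ρ
      by_cases hρ : ρ ∈ F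
      · have hρR : ρ ∈ R := Finset.mem_of_mem_filter _ hρ
        have hρneg : ρ.re < 0 := (Finset.mem_filter.1 hρ).2
        have hreβ : ρ.re ≤ -β := by
          have := hβle ρ hρR
          rw [abs_of_neg hρneg] at this
          linarith
        obtain ⟨C, hC0, hC⟩ := Dicho.exp_mul_bound A (e ρ) ρ (m ρ) β hβpos hreβ (hnil ρ hρR)
        exact ⟨C, hC0, fun _ => hC⟩
      · exact ⟨0, le_refl 0, fun h => absurd h hρ⟩
    choose C hC0 hCb using hbF
    have hbFc : ∀ ρ : ℂ, ∃ D : ℝ, 0 ≤ D ∧ (ρ ∈ Fc → ∀ s : ℝ, 0 ≤ s →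
        ‖NormedSpace.exp (s • (-A)) * e ρ‖ ≤ D * Real.exp (-(β / 2) * s)) := by
      intro ρ
      by_cases hρ : ρ ∈ Fc
      · have hρR : ρ ∈ R := Finset.mem_of_mem_filter _ hρ
        have hρpos : 0 < ρ.re :=
          lt_of_le_of_ne (not_lt.1 (Finset.mem_filter.1 hρ).2) (Ne.symm (hre ρ hρR))
        have hreβ : (-ρ).re ≤ -β := by
          have := hβle ρ hρR
          rw [abs_of_pos hρpos] at this
          simp only [Complex.neg_re]
          linarith
        have hnil' : ((-A) - (-ρ) • 1) ^ (m ρ) * e ρ = 0 := by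
          have h1 : (-A) - (-ρ) • (1 : Matrix (Fin n ⊕ Fin n) (Fin n ⊕ Fin n) ℂ)
              = -(A - ρ • 1) := by
            rw [neg_smul]
            abel
          rw [h1, neg_pow, mul_assoc, hnil ρ hρR, mul_zero]
        obtain ⟨D, hD0, hD⟩ := Dicho.exp_mul_bound (-A) (e ρ) (-ρ) (m ρ) β hβpos hreβ hnil'
        exact ⟨D, hD0, fun _ => hD⟩
      · exact ⟨0, le_refl 0, fun h => absurd h hρ⟩
    choose D hD0 hDb using hbFc
    have hCs : 0 ≤ ∑ ρ ∈ F, C ρ := Finset.sum_nonneg fun ρ _ => hC0 ρ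
    have hDs : 0 ≤ ∑ ρ ∈ Fc, D ρ := Finset.sum_nonneg fun ρ _ => hD0 ρ
    refine ⟨P, 1 + (∑ ρ ∈ F, C ρ) + (∑ ρ ∈ Fc, D ρ), β / 2, hPP, hPA, by linarith,
      by positivity, ?_, ?_⟩
    · intro t ht
      calc ‖NormedSpace.exp (t • A) * P‖
          = ‖∑ ρ ∈ F, NormedSpace.exp (t • A) * e ρ‖ := by rw [hP, Finset.mul_sum]
        _ ≤ ∑ ρ ∈ F, ‖NormedSpace.exp (t • A) * e ρ‖ := norm_sum_le _ _
        _ ≤ ∑ ρ ∈ F, C ρ * Real.exp (-(β / 2) * t) :=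
            Finset.sum_le_sum fun ρ hρ => hCb ρ hρ t ht
        _ = (∑ ρ ∈ F, C ρ) * Real.exp (-(β / 2) * t) := (Finset.sum_mul _ _ _).symm
        _ ≤ (1 + (∑ ρ ∈ F, C ρ) + (∑ ρ ∈ Fc, D ρ)) * Real.exp (-(β / 2) * t) := by
            refine mul_le_mul_of_nonneg_right (by linarith) (Real.exp_nonneg _)
    · intro t ht
      have hrw : t • A = (-t) • (-A) := by rw [neg_smul_neg]
      have hexp : Real.exp (-(β / 2) * (-t)) = Real.exp (β / 2 * t) := by ring_nf
      calc ‖NormedSpace.exp (t • A) * (1 - P)‖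
          = ‖∑ ρ ∈ Fc, NormedSpace.exp ((-t) • (-A)) * e ρ‖ := by
            rw [← hrw, hQeq, Finset.mul_sum]
        _ ≤ ∑ ρ ∈ Fc, ‖NormedSpace.exp ((-t) • (-A)) * e ρ‖ := norm_sum_le _ _
        _ ≤ ∑ ρ ∈ Fc, D ρ * Real.exp (-(β / 2) * (-t)) :=
            Finset.sum_le_sum fun ρ hρ => hDb ρ hρ (-t) (neg_nonneg.2 ht)
        _ = (∑ ρ ∈ Fc, D ρ) * Real.exp (β / 2 * t) := by rw [hexp, Finset.sum_mul]
        _ ≤ (1 + (∑ ρ ∈ F, C ρ) + (∑ ρ ∈ Fc, D ρ)) * Real.exp (β / 2 * t) := by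
            refine mul_le_mul_of_nonneg_right (by linarith) (Real.exp_nonneg _)
end

section
/- Let m, k ≥ 1. Let a₁₁, b₁₁ be m×m complex matrices, b₁₂ an m×k complex matrix, a₂₁, b₂₁ be k×m complex matrices, and a₂₂, b₂₂ be k×k complex matrices with a₂₂ invertible. For λ ∈ ℂ let A₂(λ) be the (2m+k)×(2m+k) complex block matrix with block rows [[0, I_m, 0], [λ·I_m − b₁₁, −a₁₁, −b₁₂], [−a₂₂⁻¹·b₂₁, −a₂₂⁻¹·a₂₁, a₂₂⁻¹·(λ·I_k − b₂₂)]]. Then for all λ, μ ∈ ℂ: det(a₂₂) · det(i·μ·I_{2m+k} − A₂(λ)) = (−1)^{m+k} · det of the (m+k)×(m+k) block matrix [[(λ + μ²)·I_m − i·μ·a₁₁ − b₁₁, −b₁₂], [−(b₂₁ + i·μ·a₂₁), λ·I_k − i·μ·a₂₂ − b₂₂]]. -/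
open Matrix


/-- Block determinant identity relating `det(iμ I - A₂(λ))` to the dispersion function
`Δ₂(λ, μ)` in the partially-degenerate diffusion case. -/
theorem stmt_5 (m k : ℕ) (hm : 1 ≤ m) (hk : 1 ≤ k)
    (a₁₁ b₁₁ : Matrix (Fin m) (Fin m) ℂ) (b₁₂ : Matrix (Fin m) (Fin k) ℂ)
    (a₂₁ b₂₁ : Matrix (Fin k) (Fin m) ℂ) (a₂₂ b₂₂ : Matrix (Fin k) (Fin k) ℂ)
    (ha₂₂ : IsUnit a₂₂) (l μ : ℂ)
    (A : Matrix ((Fin m ⊕ Fin m) ⊕ Fin k) ((Fin m ⊕ Fin m) ⊕ Fin k) ℂ)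
    (hA : A = Matrix.fromBlocks
      (Matrix.fromBlocks 0 1 (l • 1 - b₁₁) (-a₁₁))
      (Matrix.fromRows 0 (-b₁₂))
      (Matrix.fromCols (-(a₂₂⁻¹ * b₂₁)) (-(a₂₂⁻¹ * a₂₁)))
      (a₂₂⁻¹ * (l • 1 - b₂₂))) :
    a₂₂.det * ((Complex.I * μ) • (1 : Matrix ((Fin m ⊕ Fin m) ⊕ Fin k) ((Fin m ⊕ Fin m) ⊕ Fin k) ℂ) - A).det
      = (-1 : ℂ) ^ (m + k) *
        (Matrix.fromBlocks
          ((l + μ ^ 2) • (1 : Matrix (Fin m) (Fin m) ℂ) - (Complex.I * μ) • a₁₁ - b₁₁) (-b₁₂)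
          (-(b₂₁ + (Complex.I * μ) • a₂₁)) (l • (1 : Matrix (Fin k) (Fin k) ℂ) - (Complex.I * μ) • a₂₂ - b₂₂)).det := by
  have hdet : IsUnit a₂₂.det := (Matrix.isUnit_iff_isUnit_det a₂₂).mp ha₂₂
  set ν : ℂ := Complex.I * μ with hν
  set M : Matrix ((Fin m ⊕ Fin m) ⊕ Fin k) ((Fin m ⊕ Fin m) ⊕ Fin k) ℂ := ν • 1 - A with hM
  set X : Matrix (Fin m) (Fin m) ℂ :=
    b₁₁ - l • (1 : Matrix (Fin m) (Fin m) ℂ)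
      + (ν • (1 : Matrix (Fin m) (Fin m) ℂ) + a₁₁) * (ν • (1 : Matrix (Fin m) (Fin m) ℂ)) with hX
  set W : Matrix (Fin m) (Fin m) ℂ :=
    b₁₁ - l • (1 : Matrix (Fin m) (Fin m) ℂ)
      + (ν • (1 : Matrix (Fin m) (Fin m) ℂ) + a₁₁) * (ν • (1 : Matrix (Fin m) (Fin m) ℂ) - 1) with hW
  set Y : Matrix (Fin k) (Fin m) ℂ :=
    b₂₁ + a₂₁ * (ν • (1 : Matrix (Fin m) (Fin m) ℂ)) with hY
  set V : Matrix (Fin k) (Fin m) ℂ :=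
    b₂₁ + a₂₁ * (ν • (1 : Matrix (Fin m) (Fin m) ℂ) - 1) with hV
  set Z : Matrix (Fin k) (Fin k) ℂ :=
    ν • a₂₂ - (l • (1 : Matrix (Fin k) (Fin k) ℂ) - b₂₂) with hZ
  set E : Matrix ((Fin m ⊕ Fin m) ⊕ Fin k) ((Fin m ⊕ Fin m) ⊕ Fin k) ℂ :=
    fromBlocks 1 0 0 a₂₂ with hE
  set C11 : Matrix (Fin m ⊕ Fin m) (Fin m ⊕ Fin m) ℂ :=
    fromBlocks 1 1 (ν • (1 : Matrix (Fin m) (Fin m) ℂ) - 1) (ν • (1 : Matrix (Fin m) (Fin m) ℂ)) with hC11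
  set C : Matrix ((Fin m ⊕ Fin m) ⊕ Fin k) ((Fin m ⊕ Fin m) ⊕ Fin k) ℂ :=
    fromBlocks C11 0 0 1 with hC
  -- Step 1: decompose M into blocks
  have hMblocks : M = fromBlocks
      (fromBlocks (ν • 1) (-1) (b₁₁ - l • 1) (ν • 1 + a₁₁))
      (fromRows 0 b₁₂)
      (fromCols (a₂₂⁻¹ * b₂₁) (a₂₂⁻¹ * a₂₁))
      (ν • 1 - a₂₂⁻¹ * (l • 1 - b₂₂)) := by
    rw [hM, hA]
    ext i j
    rcases i with (i | i) | i <;> rcases j with (j | j) | j <;>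
      simp [Matrix.one_apply, Matrix.fromRows_apply_inl, Matrix.fromRows_apply_inr, Matrix.fromCols_apply_inl, Matrix.fromCols_apply_inr, sub_eq_add_neg] <;> ring
  have hdetE : E.det = a₂₂.det := by
    rw [hE, Matrix.det_fromBlocks_zero₂₁, Matrix.det_one, one_mul]
  have hdetC : C.det = 1 := by
    rw [hC, Matrix.det_fromBlocks_zero₂₁, Matrix.det_one, mul_one, hC11,
      Matrix.det_fromBlocks_one₁₁, Matrix.mul_one, sub_sub_cancel, Matrix.det_one]
  -- Step 2: compute E * M
  have hEM : E * M = fromBlocks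
      (fromBlocks (ν • 1) (-1) (b₁₁ - l • 1) (ν • 1 + a₁₁))
      (fromRows 0 b₁₂)
      (fromCols b₂₁ a₂₁)
      Z := by
    rw [hE, hMblocks, Matrix.fromBlocks_multiply]
    simp only [Matrix.one_mul, Matrix.zero_mul, Matrix.mul_zero, add_zero, zero_add,
      Matrix.mul_fromCols, Matrix.mul_sub, Matrix.mul_smul, Matrix.mul_one,
      Matrix.mul_nonsing_inv_cancel_left _ _ hdet, Matrix.mul_nonsing_inv _ hdet,
      smul_zero, sub_zero, hZ]
  -- Step 3: compute (E * M) * C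
  have hEMC : E * M * C = fromBlocks
      (fromBlocks 1 0 W X)
      (fromRows 0 b₁₂)
      (fromCols V Y)
      Z := by
    rw [hEM, hC, Matrix.fromBlocks_multiply, hC11, Matrix.fromBlocks_multiply,
      Matrix.fromCols_mul_fromBlocks]
    simp only [Matrix.mul_zero, Matrix.zero_mul, Matrix.mul_one, Matrix.one_mul,
      Matrix.neg_mul, add_zero, zero_add, ← sub_eq_add_neg, sub_sub_cancel, sub_self,
      hW, hX, hV, hY]
  -- Step 4: reindex by sumAssoc to expose block-triangular structure
  have hre : (E * M * C).submatrix (Equiv.sumAssoc (Fin m) (Fin m) (Fin k)).symm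
      (Equiv.sumAssoc (Fin m) (Fin m) (Fin k)).symm
      = fromBlocks 1 0 (fromRows W V) (fromBlocks X b₁₂ Y Z) := by
    rw [hEMC]
    ext i j
    rcases i with i | (i | i) <;> rcases j with j | (j | j) <;>
      simp [Matrix.fromRows_apply_inl, Matrix.fromRows_apply_inr, Matrix.fromCols_apply_inl, Matrix.fromCols_apply_inr, Equiv.sumAssoc]
  have hdetEMC : (E * M * C).det = (fromBlocks X b₁₂ Y Z).det := by
    rw [← Matrix.det_submatrix_equiv_self (Equiv.sumAssoc (Fin m) (Fin m) (Fin k)).symm (E * M * C),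
      hre, Matrix.det_fromBlocks_zero₁₂, Matrix.det_one, one_mul]
  -- Step 5: identify the inner block with minus the dispersion matrix
  have hν2 : ν * ν = -(μ ^ 2) := by
    rw [hν, show Complex.I * μ * (Complex.I * μ) = Complex.I ^ 2 * μ ^ 2 by ring, Complex.I_sq]
    ring
  have hneg : fromBlocks X b₁₂ Y Z = -(fromBlocks
      ((l + μ ^ 2) • (1 : Matrix (Fin m) (Fin m) ℂ) - ν • a₁₁ - b₁₁) (-b₁₂)
      (-(b₂₁ + ν • a₂₁)) (l • (1 : Matrix (Fin k) (Fin k) ℂ) - ν • a₂₂ - b₂₂)) := by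
    rw [Matrix.fromBlocks_neg, Matrix.fromBlocks_inj]
    refine ⟨?_, ?_, ?_, ?_⟩
    · rw [hX, Matrix.mul_smul, Matrix.mul_one, smul_add, smul_smul, hν2, neg_smul, add_smul]
      abel
    · rw [neg_neg]
    · rw [hY, Matrix.mul_smul, Matrix.mul_one, neg_neg]
    · rw [hZ]
      abel
  -- Conclude
  have key : a₂₂.det * M.det = (fromBlocks X b₁₂ Y Z).det := by
    calc a₂₂.det * M.det = E.det * M.det * C.det := by rw [hdetE, hdetC, mul_one]
      _ = (E * M * C).det := by rw [Matrix.det_mul, Matrix.det_mul]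
      _ = (fromBlocks X b₁₂ Y Z).det := hdetEMC
  rw [key, hneg, Matrix.det_neg]
  congr 1
  simp
end

section
/- Let n ≥ 1, let M be an n×n complex matrix, let T > 0 and μ₀ ∈ ℝ. Then det(exp(T•(M − i·μ₀·I_n)) − I_n) = 0 if and only if there exists k ∈ ℤ such that i·(μ₀ + 2kπ/T) is an eigenvalue of M. -/
open NormedSpace

lemma exp_mulVec_eigen {n : ℕ} (A : Matrix (Fin n) (Fin n) ℂ) (w : Fin n → ℂ) (c : ℂ)
    (h : A.mulVec w = c • w) :
    (exp A).mulVec w = Complex.exp c • w := by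
  letI : SeminormedRing (Matrix (Fin n) (Fin n) ℂ) := Matrix.linftyOpSemiNormedRing
  letI : NormedRing (Matrix (Fin n) (Fin n) ℂ) := Matrix.linftyOpNormedRing
  letI : NormedAlgebra ℂ (Matrix (Fin n) (Fin n) ℂ) := Matrix.linftyOpNormedAlgebra
  have hpow : ∀ k : ℕ, (A ^ k).mulVec w = c ^ k • w := by
    intro k
    induction k with
    | zero => simp [Matrix.one_mulVec]
    | succ k ih =>
      rw [pow_succ', ← Matrix.mulVec_mulVec, ih, Matrix.mulVec_smul, h, smul_smul,
        pow_succ', mul_comm c]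
  let Lf : Matrix (Fin n) (Fin n) ℂ →ₗ[ℂ] (Fin n → ℂ) :=
    { toFun := fun B => B.mulVec w
      map_add' := fun B C => Matrix.add_mulVec B C w
      map_smul' := fun r B => Matrix.smul_mulVec r B w }
  have hsum : Summable fun k : ℕ => ((k.factorial : ℂ))⁻¹ • A ^ k := expSeries_summable' A
  have h1 : (exp A).mulVec w
      = ∑' k : ℕ, (((k.factorial : ℂ))⁻¹ • A ^ k).mulVec w := by
    have hm := ContinuousLinearMap.map_tsum
      (Lf.toContinuousLinearMap : Matrix (Fin n) (Fin n) ℂ →L[ℂ] (Fin n → ℂ)) hsum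
    rw [exp_eq_tsum ℂ]
    exact hm
  rw [h1]
  have h2 : ∀ k : ℕ, (((k.factorial : ℂ))⁻¹ • A ^ k).mulVec w
      = (((k.factorial : ℂ))⁻¹ • c ^ k) • w := by
    intro k
    rw [Matrix.smul_mulVec, hpow, smul_assoc]
  have hc : Summable fun k : ℕ => ((k.factorial : ℂ))⁻¹ • c ^ k := expSeries_summable' c
  calc ∑' k : ℕ, (((k.factorial : ℂ))⁻¹ • A ^ k).mulVec w
      = ∑' k : ℕ, (((k.factorial : ℂ))⁻¹ • c ^ k) • w := by simp_rw [h2]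
    _ = (∑' k : ℕ, ((k.factorial : ℂ))⁻¹ • c ^ k) • w := hc.tsum_smul_const w
    _ = Complex.exp c • w := by
        congr 1
        rw [Complex.exp_eq_exp_ℂ, exp_eq_tsum ℂ]

/-- `det (exp (T • (M - iμ₀ I)) - I) = 0` iff `i(μ₀ + 2kπ/T)` is an eigenvalue of `M` for
some integer `k`. -/
theorem stmt_10 (n : ℕ) (hn : 1 ≤ n) (M : Matrix (Fin n) (Fin n) ℂ)
    (T : ℝ) (hT : 0 < T) (μ₀ : ℝ) :
    (NormedSpace.exp (T • (M - (Complex.I * (μ₀ : ℂ)) • 1)) - 1).det = 0 ↔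
      ∃ k : ℤ, ((Complex.I * ((μ₀ : ℂ) + 2 * (k : ℂ) * (Real.pi : ℂ) / (T : ℂ))) •
          (1 : Matrix (Fin n) (Fin n) ℂ) - M).det = 0 := by
  have hT0 : (T : ℂ) ≠ 0 := by exact_mod_cast hT.ne'
  set A : Matrix (Fin n) (Fin n) ℂ := T • (M - (Complex.I * (μ₀ : ℂ)) • 1) with hA
  -- eigenvector transfer, both directions
  have key : ∀ (w : Fin n → ℂ) (μ : ℂ), M.mulVec w = μ • w →
      A.mulVec w = ((T : ℂ) * (μ - Complex.I * (μ₀ : ℂ))) • w := by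
    intro w μ hw
    rw [hA, Matrix.smul_mulVec, Matrix.sub_mulVec, Matrix.smul_mulVec,
      Matrix.one_mulVec, hw, ← sub_smul, ← Complex.coe_smul, smul_smul]
  have key2 : ∀ (w : Fin n → ℂ) (μ : ℂ), A.mulVec w = μ • w →
      M.mulVec w = ((T : ℂ)⁻¹ * μ + Complex.I * (μ₀ : ℂ)) • w := by
    intro w μ hw
    have h1 : (T : ℂ) • (M - (Complex.I * (μ₀ : ℂ)) • 1).mulVec w = μ • w := by
      rw [← Matrix.smul_mulVec, ← hw, hA, ← Complex.coe_smul]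
    have h2 : (M - (Complex.I * (μ₀ : ℂ)) • 1).mulVec w = ((T : ℂ)⁻¹ * μ) • w := by
      have h3 := (inv_smul_eq_iff₀ hT0).mpr h1.symm
      rw [smul_smul] at h3
      exact h3.symm
    rw [Matrix.sub_mulVec, Matrix.smul_mulVec, Matrix.one_mulVec,
      sub_eq_iff_eq_add] at h2
    rw [h2, add_smul]
  constructor
  · intro hdet
    rw [← Matrix.exists_mulVec_eq_zero_iff] at hdet
    obtain ⟨v, hv0, hv⟩ := hdet
    set K : Submodule ℂ (Fin n → ℂ) := LinearMap.ker (exp A - 1).mulVecLin with hK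
    have hvK : v ∈ K := by
      rw [hK, LinearMap.mem_ker, Matrix.mulVecLin_apply, hv]
    have hKnt : Nontrivial K := Submodule.nontrivial_iff_ne_bot.mpr (by
      intro hbot
      exact hv0 (by simpa [hbot] using hvK))
    have hcomm : (exp A - 1) * A = A * (exp A - 1) := by
      have h := ((Commute.refl A).exp_right : Commute A (exp A))
      rw [sub_mul, mul_sub, one_mul, mul_one, h.eq]
    have hinv : ∀ x ∈ K, A.mulVecLin x ∈ K := by
      intro x hx
      rw [hK, LinearMap.mem_ker] at hx ⊢
      simp only [Matrix.mulVecLin_apply] at hx ⊢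
      rw [Matrix.mulVec_mulVec, hcomm, ← Matrix.mulVec_mulVec, hx, Matrix.mulVec_zero]
    let f : Module.End ℂ K := A.mulVecLin.restrict hinv
    obtain ⟨μ, hμ⟩ := Module.End.exists_eigenvalue f
    obtain ⟨x, hx⟩ := hμ.exists_hasEigenvector
    have hw0 : (x : Fin n → ℂ) ≠ 0 := fun h => hx.2 (Subtype.ext h)
    have hAe : A.mulVec (x : Fin n → ℂ) = μ • (x : Fin n → ℂ) := by
      have h1 : f x = μ • x := hx.apply_eq_smul
      have h2 := congrArg (Subtype.val) h1
      rw [LinearMap.restrict_coe_apply] at h2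
      rw [← Matrix.mulVecLin_apply]
      exact h2
    have hxK : (exp A).mulVec (x : Fin n → ℂ) = (x : Fin n → ℂ) := by
      have hm : (exp A - 1).mulVecLin (x : Fin n → ℂ) = 0 := LinearMap.mem_ker.mp x.2
      rw [Matrix.mulVecLin_apply, Matrix.sub_mulVec, Matrix.one_mulVec, sub_eq_zero] at hm
      exact hm
    have hexp := exp_mulVec_eigen A _ μ hAe
    rw [hxK] at hexp
    have hexpμ : Complex.exp μ = 1 := by
      by_contra hne
      have h : (Complex.exp μ - 1) • (x : Fin n → ℂ) = 0 := by
        rw [sub_smul, one_smul, ← hexp, sub_self]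
      rcases smul_eq_zero.mp h with h' | h'
      · exact hne (by linear_combination h')
      · exact hw0 h'
    obtain ⟨k, hk⟩ := Complex.exp_eq_one_iff.mp hexpμ
    have hM := key2 _ μ hAe
    have hscal : Complex.I * ((μ₀ : ℂ) + 2 * (k : ℂ) * (Real.pi : ℂ) / (T : ℂ))
        = (T : ℂ)⁻¹ * μ + Complex.I * (μ₀ : ℂ) := by
      rw [hk]
      field_simp
      ring
    refine ⟨k, (Matrix.exists_mulVec_eq_zero_iff).mp ⟨x, hw0, ?_⟩⟩
    rw [Matrix.sub_mulVec, Matrix.smul_mulVec, Matrix.one_mulVec, hM, hscal,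
      sub_self]
  · rintro ⟨k, hk⟩
    rw [← Matrix.exists_mulVec_eq_zero_iff] at hk
    obtain ⟨w, hw0, hw⟩ := hk
    have hM : M.mulVec w
        = (Complex.I * ((μ₀ : ℂ) + 2 * (k : ℂ) * (Real.pi : ℂ) / (T : ℂ))) • w := by
      rw [Matrix.sub_mulVec, Matrix.smul_mulVec, Matrix.one_mulVec,
        sub_eq_zero] at hw
      exact hw.symm
    have hAe := key w _ hM
    have hconst : (T : ℂ) * (Complex.I * ((μ₀ : ℂ) + 2 * (k : ℂ) * (Real.pi : ℂ) / (T : ℂ))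
        - Complex.I * (μ₀ : ℂ)) = (k : ℂ) * (2 * (Real.pi : ℂ) * Complex.I) := by
      field_simp
      ring
    rw [hconst] at hAe
    have hexp := exp_mulVec_eigen A w _ hAe
    rw [Complex.exp_eq_one_iff.mpr ⟨k, rfl⟩, one_smul] at hexp
    exact Matrix.exists_mulVec_eq_zero_iff.mp ⟨w, hw0,
      by rw [Matrix.sub_mulVec, Matrix.one_mulVec, hexp, sub_self]⟩
end

section
/- Let n ≥ 1, T > 0, and let A : ℝ → Mₙ(ℂ) be continuous. Let μ₁, μ₂ ∈ ℝ with μ₂ − μ₁ = 2kπ/T for some k ∈ ℤ. For j = 1, 2, let Φⱼ : ℝ → Mₙ(ℂ) satisfy Φⱼ(0) = I_n and, for every ξ ∈ ℝ, Φⱼ has derivative (A(ξ) − i·μⱼ·I_n)·Φⱼ(ξ) at ξ. Then det(Φ₂(T) − I_n) = det(Φ₁(T) − I_n). -/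
open scoped Matrix

attribute [local instance] Matrix.linftyOpNormedAddCommGroup Matrix.linftyOpNormedSpace

/-- The Evans function `det (Φ(T) - I)` is periodic in the Floquet parameter `μ` with
period `2π/T`. -/
theorem stmt_12 (n : ℕ) (hn : 1 ≤ n) (T : ℝ) (hT : 0 < T)
    (A : ℝ → Matrix (Fin n) (Fin n) ℂ) (hA : Continuous A)
    (μ₁ μ₂ : ℝ) (k : ℤ) (hμ : μ₂ - μ₁ = 2 * (k : ℝ) * Real.pi / T)
    (Φ₁ Φ₂ : ℝ → Matrix (Fin n) (Fin n) ℂ)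
    (hΦ₁0 : Φ₁ 0 = 1)
    (hΦ₁ : ∀ ξ : ℝ, HasDerivAt Φ₁ ((A ξ - (Complex.I * (μ₁ : ℂ)) • 1) * Φ₁ ξ) ξ)
    (hΦ₂0 : Φ₂ 0 = 1)
    (hΦ₂ : ∀ ξ : ℝ, HasDerivAt Φ₂ ((A ξ - (Complex.I * (μ₂ : ℂ)) • 1) * Φ₂ ξ) ξ) :
    (Φ₂ T - 1).det = (Φ₁ T - 1).det := by
  -- the scalar factor
  set ν : ℂ := Complex.I * ((μ₂ : ℂ) - (μ₁ : ℂ)) with hν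
  set c : ℝ → ℂ := fun ξ => Complex.exp (-ν * ξ) with hc
  have hc' : ∀ ξ : ℝ, HasDerivAt c (-ν * c ξ) ξ := by
    intro ξ
    have h1 : HasDerivAt (fun ξ : ℝ => -ν * (ξ : ℂ)) (-ν) ξ := by
      simpa using (Complex.ofRealCLM.hasDerivAt.const_mul (-ν))
    simpa [hc, mul_comm, neg_mul, mul_neg] using h1.cexp
  set Ψ : ℝ → Matrix (Fin n) (Fin n) ℂ := fun ξ => c ξ • Φ₁ ξ with hΨdef
  have hΨ : ∀ ξ : ℝ, HasDerivAt Ψ ((A ξ - (Complex.I * (μ₂ : ℂ)) • 1) * Ψ ξ) ξ := by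
    intro ξ
    have h : HasDerivAt Ψ (c ξ • ((A ξ - (Complex.I * (μ₁ : ℂ)) • 1) * Φ₁ ξ) + (-ν * c ξ) • Φ₁ ξ) ξ :=
      (hc' ξ).smul (hΦ₁ ξ)
    convert h using 1
    simp only [hΨdef, sub_mul, Matrix.smul_mul, Matrix.one_mul, Matrix.mul_smul, smul_smul,
      smul_sub]
    rw [hν]
    module
  have hΨ0 : Ψ 0 = 1 := by simp [hΨdef, hc, hΦ₁0]
  -- uniqueness of ODE solutions on [0, T]
  -- clamp time to [0, T] to get a globally Lipschitz vector field
  set B : ℝ → Matrix (Fin n) (Fin n) ℂ :=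
    fun t => A (min (max t 0) T) - (Complex.I * (μ₂ : ℂ)) • 1 with hB
  have hBcont : Continuous B := by
    exact ((hA.comp ((continuous_id.max continuous_const).min continuous_const)).sub
      continuous_const)
  obtain ⟨C, hC⟩ : ∃ C : ℝ, ∀ t : ℝ, ‖B t‖ ≤ C := by
    obtain ⟨C, hC⟩ := (isCompact_Icc (a := (0:ℝ)) (b := T)).exists_bound_of_continuousOn
      hBcont.continuousOn
    refine ⟨C, fun t => ?_⟩
    have h1 : (0:ℝ) ≤ min (max t 0) T := le_min (le_max_right _ _) hT.le
    have h2 : B t = B (min (max t 0) T) := by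
      rw [hB]
      simp only []
      rw [max_eq_left h1, min_eq_left (min_le_right _ _)]
    rw [h2]
    exact hC _ ⟨h1, min_le_right _ _⟩
  set K : NNReal := ⟨max C 0, le_max_right _ _⟩ with hK
  have hBK : ∀ t : ℝ, ‖B t‖ ≤ (K : ℝ) := fun t => (hC t).trans (le_max_left _ _)
  have hlip : ∀ t : ℝ, LipschitzWith K (fun x : Matrix (Fin n) (Fin n) ℂ => B t * x) := by
    intro t
    apply LipschitzWith.of_dist_le_mul
    intro x y
    rw [dist_eq_norm, dist_eq_norm, ← mul_sub]
    calc ‖B t * (x - y)‖ ≤ ‖B t‖ * ‖x - y‖ := Matrix.linfty_opNorm_mul _ _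
      _ ≤ (K : ℝ) * ‖x - y‖ := by
          exact mul_le_mul_of_nonneg_right (hBK t) (norm_nonneg _)
  have hBt : ∀ t ∈ Set.Ico (0:ℝ) T, B t = A t - (Complex.I * (μ₂ : ℂ)) • 1 := by
    intro t ht
    have : min (max t 0) T = t := by
      rw [max_eq_left ht.1, min_eq_left ht.2.le]
    rw [hB]; simp only [this]
  have key : Set.EqOn Φ₂ Ψ (Set.Icc 0 T) := by
    apply ODE_solution_unique_of_mem_Icc_right
      (v := fun t x => B t * x) (s := fun _ => Set.univ)
      (fun t _ => (hlip t).lipschitzOnWith)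
    · intro t ht
      exact (hΦ₂ t).continuousAt.continuousWithinAt
    · intro t ht
      rw [hBt t ht]
      exact (hΦ₂ t).hasDerivWithinAt
    · intro t _; trivial
    · intro t ht
      exact (hΨ t).continuousAt.continuousWithinAt
    · intro t ht
      rw [hBt t ht]
      exact (hΨ t).hasDerivWithinAt
    · intro t _; trivial
    · rw [hΦ₂0, hΨ0]
  have hT' : Φ₂ T = Ψ T := key ⟨hT.le, le_rfl⟩
  have hcT : c T = 1 := by
    rw [hc]
    have : -ν * (T : ℂ) = (-k : ℤ) * (2 * Real.pi * Complex.I) := by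
      rw [hν]
      have hμ' : ((μ₂ : ℂ) - (μ₁ : ℂ)) = 2 * (k : ℂ) * (Real.pi : ℂ) / (T : ℂ) := by
        exact_mod_cast hμ
      rw [hμ']
      have hTne : (T : ℂ) ≠ 0 := by exact_mod_cast hT.ne'
      field_simp
      push_cast
      try ring
      try tauto
    simp only [this]
    exact Complex.exp_int_mul_two_pi_mul_I (-k)
  rw [hT', hΨdef]
  simp [hcT]
end

section
/- Define H : ℝ × ℝ → ℝ by H(x, y) = −(2/3)x² + (1/3)x³ + (2/3)xy − (2/3)y². Let u, v : ℝ → ℝ satisfy, for all t ∈ ℝ, u has derivative (2/3)u(t) − (4/3)v(t) at t and v has derivative −u(t)² + (4/3)u(t) − (2/3)v(t) at t. Then H(u(t), v(t)) = H(u(0), v(0)) for all t ∈ ℝ. -/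
/-- `H(x,y) = -(2/3)x² + (1/3)x³ + (2/3)xy - (2/3)y²` is a first integral of the planar
system `u' = (2/3)u - (4/3)v`, `v' = -u² + (4/3)u - (2/3)v`. -/
theorem stmt_18 (H : ℝ × ℝ → ℝ)
    (hH : ∀ x y : ℝ,
      H (x, y) = -(2 / 3) * x ^ 2 + (1 / 3) * x ^ 3 + (2 / 3) * x * y - (2 / 3) * y ^ 2)
    (u v : ℝ → ℝ)
    (hu : ∀ t : ℝ, HasDerivAt u ((2 / 3) * u t - (4 / 3) * v t) t)
    (hv : ∀ t : ℝ, HasDerivAt v (-(u t) ^ 2 + (4 / 3) * u t - (2 / 3) * v t) t) :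
    ∀ t : ℝ, H (u t, v t) = H (u 0, v 0) := by
  have key : ∀ t : ℝ, HasDerivAt (fun t => H (u t, v t)) 0 t := by
    intro t
    have hg : (fun t => H (u t, v t)) = fun t =>
        -(2 / 3) * u t ^ 2 + (1 / 3) * u t ^ 3 + (2 / 3) * u t * v t - (2 / 3) * v t ^ 2 := by
      funext s; exact hH (u s) (v s)
    rw [hg]
    have hu' := hu t
    have hv' := hv t
    have h := (((((hu'.pow 2).const_mul (-(2/3 : ℝ))).add
      ((hu'.pow 3).const_mul (1/3 : ℝ))).add
      (((hu'.const_mul (2/3 : ℝ)).mul hv'))).sub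
      ((hv'.pow 2).const_mul (2/3 : ℝ)))
    refine (h.congr_deriv ?_).congr_of_eventuallyEq (Filter.Eventually.of_forall fun s => ?_)
    · norm_num
      ring
    · simp only [Pi.add_apply, Pi.sub_apply, Pi.mul_apply, Pi.pow_apply]
  intro t
  have : ∀ t : ℝ, (fun t => H (u t, v t)) t = (fun t => H (u t, v t)) 0 := by
    intro t
    have := is_const_of_deriv_eq_zero (f := fun t => H (u t, v t))
      (fun s => (key s).differentiableAt) (fun s => (key s).deriv) t 0
    exact this
  exact this t
end
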